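/- arXiv:1511.02804 — 4 statements merged into one kernel-verified Lean document; each statement's English description precedes it below -/
import Mathlib

section
/- For every partition λ, the sum over all boxes of λ of the square of the hook length minus the sum over all boxes of the square of the content equals the square of the size of λ, i.e., Σ_{□∈λ} h_□² − Σ_{□∈λ} c_□² = |λ|². -/
open Finset

namespace PaperDefs

/-- Hook length of the box in row `i`, column `j` (0-indexed) of `μ`. -/
def hookLen (μ : YoungDiagram) (i j : ℕ) : ℕ :=
  (μ.rowLen i - j) + (μ.colLen j - i) - 1

/-- Content of a box. -/
def content (c : ℕ × ℕ) : ℤ := (c.2 : ℤ) - (c.1 : ℤ)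

/-- `z_i = 1` (horizontal edge) in the 01-sequence of `μ`; the 0's (vertical
edges) occur exactly at the positions `λ_{r+1} - (r+1) = rowLen r - (r+1)`,
which realizes the normalization `#{i ≥ 0 : z_i = 0} = #{i < 0 : z_i = 1}`. -/
def ZOne (μ : YoungDiagram) (i : ℤ) : Prop :=
  ∀ r : ℕ, i ≠ (μ.rowLen r : ℤ) - (r + 1)

/-- `μ` is a `t`-core: no hook length is divisible by `t`. -/
def IsTCore (t : ℕ) (μ : YoungDiagram) : Prop :=
  ∀ c ∈ μ.cells, ¬ (t ∣ hookLen μ c.1 c.2)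

/-- `ν` is obtained from `μ` by adding one `t`-hook: a pair
`(z_i, z_{i+t}) = (0, 1)` of the 01-sequence of `μ` is exchanged to `(1, 0)`. -/
def AddHook (t : ℕ) (μ ν : YoungDiagram) : Prop :=
  ∃ i : ℤ, ¬ ZOne μ i ∧ ZOne μ (i + (t : ℤ)) ∧
    (∀ j : ℤ, ZOne ν j ↔ (j = i ∨ (j ≠ i + (t : ℤ) ∧ ZOne μ j)))

/-- `lam ≥_t μ` : `lam` is obtained from `μ` by successively adding `t`-hooks. -/
def GEt (t : ℕ) (μ lam : YoungDiagram) : Prop :=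
  Relation.ReflTransGen (AddHook t) μ lam

/-- Number of saturated chains of `n` successive `t`-hook additions from `μ` to
`lam`; this equals `F_{λ/μ}` when `|λ/μ| = nt` and vanishes otherwise. -/
noncomputable def numChains (t n : ℕ) (μ lam : YoungDiagram) : ℕ :=
  Set.ncard {c : ℕ → YoungDiagram |
    c 0 = μ ∧ c n = lam ∧ ∀ k < n, AddHook t (c k) (c (k + 1))}

/-- `H_μ`, the product of all hook lengths of `μ`. -/
def Hprod (μ : YoungDiagram) : ℚ :=
  ∏ c ∈ μ.cells, (hookLen μ c.1 c.2 : ℚ)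

/-- `G_μ = 1 / ∏_{h ∈ 𝓗_t(μ)} h`. -/
def Gfun (t : ℕ) (μ : YoungDiagram) : ℚ :=
  1 / ∏ c ∈ μ.cells.filter (fun c => t ∣ hookLen μ c.1 c.2), (hookLen μ c.1 c.2 : ℚ)

/-- The `t`-difference operator `D_t`. -/
noncomputable def Dt (t : ℕ) (g : YoungDiagram → ℚ) (μ : YoungDiagram) : ℚ :=
  (∑ᶠ ν ∈ {ν : YoungDiagram | AddHook t μ ν}, g ν) - g μ

/-- `P_g(n) = Σ_{λ ≥_t μ, |λ/μ| = nt} F_{λ/μ} g(λ)`. -/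
noncomputable def Pg (t : ℕ) (μ : YoungDiagram) (g : YoungDiagram → ℚ) (n : ℕ) : ℚ :=
  ∑ᶠ lam : YoungDiagram, (numChains t n μ lam : ℚ) * g lam

/-- `ν` is obtained from `μ` by adding a single box. -/
def AddBox (μ ν : YoungDiagram) : Prop :=
  ∃ cell : ℕ × ℕ, cell ∉ μ.cells ∧ ν.cells = insert cell μ.cells

/-- `ν` is obtained from `μ` by adding a single box of content `k`. -/
def AddBoxAt (μ ν : YoungDiagram) (k : ℤ) : Prop :=
  ∃ cell : ℕ × ℕ, cell ∉ μ.cells ∧ ν.cells = insert cell μ.cells ∧ content cell = k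

/-- `μ` has an inner corner of content `k` (a box of content `k` can be added). -/
def InnerCorner (μ : YoungDiagram) (k : ℤ) : Prop :=
  ∃ ν : YoungDiagram, AddBoxAt μ ν k

/-- `μ` has an outer corner of content `k` (a box of content `k` can be removed). -/
def OuterCorner (μ : YoungDiagram) (k : ℤ) : Prop :=
  ∃ ν : YoungDiagram, AddBoxAt ν μ k

/-- `x 0 < x 1 < ⋯ < x m` are the contents of the inner corners of `μ` and
`y 1 < ⋯ < y m` those of the outer corners. -/
def CornerData (μ : YoungDiagram) (m : ℕ) (x y : ℕ → ℤ) : Prop :=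
  (∀ k : ℤ, InnerCorner μ k ↔ ∃ i ≤ m, x i = k) ∧
  (∀ k : ℤ, OuterCorner μ k ↔ ∃ j, 1 ≤ j ∧ j ≤ m ∧ y j = k) ∧
  (∀ i j, i < j → j ≤ m → x i < x j) ∧
  (∀ i j, 1 ≤ i → i < j → j ≤ m → y i < y j)

/-- `q_k = Σ_{i=0}^m x_i^k − Σ_{j=1}^m y_j^k`. -/
def qPow (m : ℕ) (x y : ℕ → ℤ) (k : ℕ) : ℤ :=
  (∑ i ∈ range (m + 1), x i ^ k) - ∑ j ∈ range m, y (j + 1) ^ k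

/-- Size of the `i`-th `t`-quotient of `lam`: boxes of `λ^i` correspond to
pairs `i' < j'` with `i' ≡ j' ≡ i (mod t)`, `z_{i'} = 1`, `z_{j'} = 0`. -/
noncomputable def quotientSize (t : ℕ) (lam : YoungDiagram) (i : ℕ) : ℕ :=
  Set.ncard {p : ℤ × ℤ | p.1 < p.2 ∧ p.1 % (t : ℤ) = (i : ℤ) ∧ p.2 % (t : ℤ) = (i : ℤ) ∧
    ZOne lam p.1 ∧ ¬ ZOne lam p.2}

/-- The multiset of contents of the boxes of `μ`. -/
def contentsMultiset (μ : YoungDiagram) : Multiset ℤ :=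
  μ.cells.val.map content

/-- The number of standard Young tableaux of shape `μ`, given by the
hook length formula `f_μ = |μ|! / H_μ`. -/
def fSYT (μ : YoungDiagram) : ℚ :=
  (Nat.factorial μ.card : ℚ) / Hprod μ

end PaperDefs

open PaperDefs

section HookAuxSection

namespace HookAux

/-- arm length -/
def A (μ : YoungDiagram) (c : ℕ × ℕ) : ℕ := μ.rowLen c.1 - 1 - c.2
/-- leg length -/
def L (μ : YoungDiagram) (c : ℕ × ℕ) : ℕ := μ.colLen c.2 - 1 - c.1

lemma cells_decomp (μ : YoungDiagram) :
    μ.cells = (Finset.range (μ.colLen 0)).biUnion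
      (fun i => {i} ×ˢ Finset.range (μ.rowLen i)) := by
  ext ⟨i, j⟩
  simp only [YoungDiagram.mem_cells, Finset.mem_biUnion, Finset.mem_range,
    Finset.mem_product, Finset.mem_singleton]
  constructor
  · intro h
    refine ⟨i, ?_, rfl, YoungDiagram.mem_iff_lt_rowLen.mp h⟩
    exact YoungDiagram.mem_iff_lt_colLen.mp (μ.up_left_mem le_rfl (Nat.zero_le j) h)
  · rintro ⟨i', _, rfl, hj⟩
    exact YoungDiagram.mem_iff_lt_rowLen.mpr hj

lemma sum_cells_rows {M : Type*} [AddCommMonoid M] (μ : YoungDiagram) (f : ℕ × ℕ → M) :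
    ∑ c ∈ μ.cells, f c
      = ∑ i ∈ Finset.range (μ.colLen 0), ∑ j ∈ Finset.range (μ.rowLen i), f (i, j) := by
  rw [cells_decomp μ, Finset.sum_biUnion]
  · refine Finset.sum_congr rfl fun i _ => ?_
    rw [Finset.sum_product, Finset.sum_singleton]
  · rintro a _ b _ hab
    simp only [Finset.disjoint_left, Finset.mem_product, Finset.mem_singleton]
    rintro ⟨x1, x2⟩ ⟨h1, _⟩ ⟨h2, _⟩
    exact hab (h1 ▸ h2)

lemma sum_row_reflect {M : Type*} [AddCommMonoid M] (μ : YoungDiagram) (f : ℕ → M) :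
    ∑ c ∈ μ.cells, f (μ.rowLen c.1 - 1 - c.2) = ∑ c ∈ μ.cells, f c.2 := by
  rw [sum_cells_rows μ (fun c => f (μ.rowLen c.1 - 1 - c.2)),
    sum_cells_rows μ (fun c => f c.2)]
  exact Finset.sum_congr rfl fun i _ => Finset.sum_range_reflect (fun j => f j) _

lemma sum_transpose {M : Type*} [AddCommMonoid M] (μ : YoungDiagram) (f : ℕ × ℕ → M) :
    ∑ c ∈ μ.cells, f c = ∑ c ∈ μ.transpose.cells, f c.swap := by
  refine Finset.sum_nbij' Prod.swap Prod.swap ?_ ?_ ?_ ?_ ?_ <;>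
    simp [YoungDiagram.mem_cells, YoungDiagram.mem_transpose]

lemma sum_col_reflect {M : Type*} [AddCommMonoid M] (μ : YoungDiagram) (f : ℕ → M) :
    ∑ c ∈ μ.cells, f (μ.colLen c.2 - 1 - c.1) = ∑ c ∈ μ.cells, f c.1 := by
  rw [sum_transpose μ (fun c => f (μ.colLen c.2 - 1 - c.1)),
    sum_transpose μ (fun c => f c.1)]
  simp only [Prod.snd_swap, Prod.fst_swap]
  simp only [← YoungDiagram.rowLen_transpose]
  exact sum_row_reflect μ.transpose f


/-- classifier of an ordered pair of cells by coordinatewise comparison -/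
def cls (p : (ℕ × ℕ) × (ℕ × ℕ)) : ℕ :=
  (if p.1.1 < p.2.1 then 0 else if p.2.1 < p.1.1 then 1 else 2) * 3 +
  (if p.1.2 < p.2.2 then 0 else if p.2.2 < p.1.2 then 1 else 2)

lemma cls_lt (p : (ℕ × ℕ) × (ℕ × ℕ)) : cls p < 9 := by
  unfold cls; split_ifs with h1 h2 h3 h4 h5 h6 <;> first | omega | (constructor <;> omega) | (simp; omega)

lemma cls0 (p : (ℕ × ℕ) × (ℕ × ℕ)) : cls p = 0 ↔ p.1.1 < p.2.1 ∧ p.1.2 < p.2.2 := by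
  unfold cls; split_ifs with h1 h2 h3 h4 h5 h6 <;> first | omega | (constructor <;> omega) | (simp; omega)
lemma cls1 (p : (ℕ × ℕ) × (ℕ × ℕ)) : cls p = 1 ↔ p.1.1 < p.2.1 ∧ p.2.2 < p.1.2 := by
  unfold cls; split_ifs with h1 h2 h3 h4 h5 h6 <;> first | omega | (constructor <;> omega) | (simp; omega)
lemma cls2 (p : (ℕ × ℕ) × (ℕ × ℕ)) : cls p = 2 ↔ p.1.1 < p.2.1 ∧ p.1.2 = p.2.2 := by
  unfold cls; split_ifs with h1 h2 h3 h4 h5 h6 <;> first | omega | (constructor <;> omega) | (simp; omega)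
lemma cls3 (p : (ℕ × ℕ) × (ℕ × ℕ)) : cls p = 3 ↔ p.2.1 < p.1.1 ∧ p.1.2 < p.2.2 := by
  unfold cls; split_ifs with h1 h2 h3 h4 h5 h6 <;> first | omega | (constructor <;> omega) | (simp; omega)
lemma cls4 (p : (ℕ × ℕ) × (ℕ × ℕ)) : cls p = 4 ↔ p.2.1 < p.1.1 ∧ p.2.2 < p.1.2 := by
  unfold cls; split_ifs with h1 h2 h3 h4 h5 h6 <;> first | omega | (constructor <;> omega) | (simp; omega)
lemma cls5 (p : (ℕ × ℕ) × (ℕ × ℕ)) : cls p = 5 ↔ p.2.1 < p.1.1 ∧ p.1.2 = p.2.2 := by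
  unfold cls; split_ifs with h1 h2 h3 h4 h5 h6 <;> first | omega | (constructor <;> omega) | (simp; omega)
lemma cls6 (p : (ℕ × ℕ) × (ℕ × ℕ)) : cls p = 6 ↔ p.1.1 = p.2.1 ∧ p.1.2 < p.2.2 := by
  unfold cls; split_ifs with h1 h2 h3 h4 h5 h6 <;> first | omega | (constructor <;> omega) | (simp; omega)
lemma cls7 (p : (ℕ × ℕ) × (ℕ × ℕ)) : cls p = 7 ↔ p.1.1 = p.2.1 ∧ p.2.2 < p.1.2 := by
  unfold cls; split_ifs with h1 h2 h3 h4 h5 h6 <;> first | omega | (constructor <;> omega) | (simp; omega)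
lemma cls8 (p : (ℕ × ℕ) × (ℕ × ℕ)) : cls p = 8 ↔ p.1.1 = p.2.1 ∧ p.1.2 = p.2.2 := by
  unfold cls; split_ifs with h1 h2 h3 h4 h5 h6 <;> first | omega | (constructor <;> omega) | (simp; omega)

lemma card_filter_swap (s : Finset (ℕ × ℕ)) (Q : (ℕ × ℕ) × (ℕ × ℕ) → Prop)
    [DecidablePred Q] :
    ((s ×ˢ s).filter Q).card = ((s ×ˢ s).filter fun p => Q (p.2, p.1)).card := by
  refine Finset.card_nbij' (fun p => (p.2, p.1)) (fun p => (p.2, p.1)) ?_ ?_ ?_ ?_ <;>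
    simp +contextual [Set.MapsTo, Set.LeftInvOn, Set.RightInvOn, Finset.mem_filter, Finset.mem_product, and_comm]

lemma mem_cells_of_le {μ : YoungDiagram} {v : ℕ × ℕ} (hv : v ∈ μ.cells)
    {u : ℕ × ℕ} (h1 : u.1 ≤ v.1) (h2 : u.2 ≤ v.2) : u ∈ μ.cells := by
  rw [YoungDiagram.mem_cells] at hv ⊢
  exact μ.up_left_mem h1 h2 hv

lemma count_key (μ : YoungDiagram) :
    μ.card ^ 2 = μ.card +
      2 * ∑ c ∈ μ.cells, (c.1 + c.2 + c.1 * c.2 + A μ c * L μ c) := by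
  classical
  set P := μ.cells ×ˢ μ.cells with hPdef
  have hP : P.card = μ.card ^ 2 := by
    rw [hPdef, Finset.card_product, sq]
  have hfib : P.card = ∑ k ∈ Finset.range 9, (P.filter fun p => cls p = k).card :=
    Finset.card_eq_sum_card_fiberwise (fun p _ => Finset.mem_range.mpr (cls_lt p))
  have hPmem : ∀ p : (ℕ × ℕ) × (ℕ × ℕ), p ∈ P → p.1 ∈ μ.cells ∧ p.2 ∈ μ.cells := by
    intro p hp
    rw [hPdef, Finset.mem_product] at hp
    exact hp
  -- class 8 : diagonal
  have h8 : (P.filter fun p => cls p = 8).card = μ.card := by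
    refine Finset.card_nbij' (fun p => p.1) (fun u => (u, u)) ?_ ?_ ?_ ?_
    · rintro p hp
      exact (hPmem p (Finset.mem_filter.mp hp).1).1
    · intro u hu
      refine Finset.mem_filter.mpr ⟨?_, (cls8 _).mpr ⟨rfl, rfl⟩⟩
      rw [hPdef, Finset.mem_product]; exact ⟨hu, hu⟩
    · rintro ⟨⟨a, b⟩, ⟨c, d⟩⟩ hp
      have h := ((cls8 _).mp (Finset.mem_filter.mp hp).2)
      have h1 : a = c := h.1
      have h2 : b = d := h.2
      show ((a, b), (a, b)) = ((a, b), (c, d))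
      rw [h1, h2]
    · intro u _; rfl
  -- class 6 : same row
  have h6 : (P.filter fun p => cls p = 6).card = ∑ v ∈ μ.cells, v.2 := by
    rw [Finset.card_eq_sum_card_fiberwise
      (f := fun p => p.2) (t := μ.cells)
      (fun p hp => (hPmem p (Finset.mem_filter.mp hp).1).2)]
    refine Finset.sum_congr rfl fun v hv => ?_
    rw [show v.2 = (Finset.range v.2).card from (Finset.card_range v.2).symm]
    refine Finset.card_nbij' (fun p => p.1.2) (fun j => ((v.1, j), v)) ?_ ?_ ?_ ?_
    · rintro p hp
      obtain ⟨hp1, hfb⟩ := Finset.mem_filter.mp hp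
      have hlt : p.1.2 < p.2.2 := ((cls6 _).mp (Finset.mem_filter.mp hp1).2).2
      have e2 : p.2.2 = v.2 := congrArg Prod.snd hfb
      show p.1.2 ∈ Finset.range v.2
      rw [Finset.mem_range]; omega
    · intro j hj
      rw [Finset.mem_coe, Finset.mem_range] at hj
      refine Finset.mem_filter.mpr ⟨Finset.mem_filter.mpr ⟨?_, ?_⟩, rfl⟩
      · rw [hPdef, Finset.mem_product]
        exact ⟨mem_cells_of_le hv le_rfl (le_of_lt hj), hv⟩
      · exact (cls6 _).mpr ⟨rfl, hj⟩
    · rintro ⟨⟨a, b⟩, w⟩ hp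
      obtain ⟨hp1, hfb⟩ := Finset.mem_filter.mp hp
      have e2 : w = v := hfb
      have e1 : a = w.1 := ((cls6 _).mp (Finset.mem_filter.mp hp1).2).1
      show ((v.1, b), v) = ((a, b), w)
      subst e2; rw [e1]
    · intro j _; rfl
  -- class 2 : same column
  have h2c : (P.filter fun p => cls p = 2).card = ∑ v ∈ μ.cells, v.1 := by
    rw [Finset.card_eq_sum_card_fiberwise
      (f := fun p => p.2) (t := μ.cells)
      (fun p hp => (hPmem p (Finset.mem_filter.mp hp).1).2)]
    refine Finset.sum_congr rfl fun v hv => ?_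
    rw [show v.1 = (Finset.range v.1).card from (Finset.card_range v.1).symm]
    refine Finset.card_nbij' (fun p => p.1.1) (fun i => ((i, v.2), v)) ?_ ?_ ?_ ?_
    · rintro p hp
      obtain ⟨hp1, hfb⟩ := Finset.mem_filter.mp hp
      have hlt : p.1.1 < p.2.1 := ((cls2 _).mp (Finset.mem_filter.mp hp1).2).1
      have e2 : p.2.1 = v.1 := congrArg Prod.fst hfb
      show p.1.1 ∈ Finset.range v.1
      rw [Finset.mem_range]; omega
    · intro i hi
      rw [Finset.mem_coe, Finset.mem_range] at hi
      refine Finset.mem_filter.mpr ⟨Finset.mem_filter.mpr ⟨?_, ?_⟩, rfl⟩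
      · rw [hPdef, Finset.mem_product]
        exact ⟨mem_cells_of_le hv (le_of_lt hi) le_rfl, hv⟩
      · exact (cls2 _).mpr ⟨hi, rfl⟩
    · rintro ⟨⟨a, b⟩, w⟩ hp
      obtain ⟨hp1, hfb⟩ := Finset.mem_filter.mp hp
      have e2 : w = v := hfb
      have e1 : b = w.2 := ((cls2 _).mp (Finset.mem_filter.mp hp1).2).2
      show ((a, v.2), v) = ((a, b), w)
      subst e2; rw [e1]
    · intro i _; rfl
  -- class 0 : strictly NW pairs
  have h0 : (P.filter fun p => cls p = 0).card = ∑ v ∈ μ.cells, v.1 * v.2 := by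
    rw [Finset.card_eq_sum_card_fiberwise
      (f := fun p => p.2) (t := μ.cells)
      (fun p hp => (hPmem p (Finset.mem_filter.mp hp).1).2)]
    refine Finset.sum_congr rfl fun v hv => ?_
    rw [show v.1 * v.2 = (Finset.range v.1 ×ˢ Finset.range v.2).card by
      rw [Finset.card_product, Finset.card_range, Finset.card_range]]
    refine Finset.card_nbij' (fun p => p.1) (fun q => (q, v)) ?_ ?_ ?_ ?_
    · rintro p hp
      obtain ⟨hp1, hfb⟩ := Finset.mem_filter.mp hp
      obtain ⟨h1, h2⟩ := (cls0 _).mp (Finset.mem_filter.mp hp1).2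
      have e1 : p.2.1 = v.1 := congrArg Prod.fst hfb
      have e2 : p.2.2 = v.2 := congrArg Prod.snd hfb
      show p.1 ∈ Finset.range v.1 ×ˢ Finset.range v.2
      simp only [Finset.mem_product, Finset.mem_range]
      constructor <;> omega
    · intro q hq
      rw [Finset.mem_coe, Finset.mem_product, Finset.mem_range, Finset.mem_range] at hq
      refine Finset.mem_filter.mpr ⟨Finset.mem_filter.mpr ⟨?_, ?_⟩, rfl⟩
      · rw [hPdef, Finset.mem_product]
        exact ⟨mem_cells_of_le hv (le_of_lt hq.1) (le_of_lt hq.2), hv⟩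
      · exact (cls0 _).mpr ⟨hq.1, hq.2⟩
    · rintro ⟨u, w⟩ hp
      obtain ⟨hp1, hfb⟩ := Finset.mem_filter.mp hp
      have e2 : w = v := hfb
      show (u, v) = (u, w)
      rw [e2]
    · intro q _; rfl
  -- class 1 : decreasing pairs, fibered over the hook corner
  have h1 : (P.filter fun p => cls p = 1).card = ∑ w ∈ μ.cells, A μ w * L μ w := by
    rw [Finset.card_eq_sum_card_fiberwise
      (f := fun p => (p.1.1, p.2.2)) (t := μ.cells) ?_]
    swap
    · rintro p hp
      obtain ⟨hpP, hc⟩ := Finset.mem_filter.mp hp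
      obtain ⟨-, hlt⟩ := (cls1 _).mp hc
      exact mem_cells_of_le (hPmem p hpP).1 le_rfl (le_of_lt hlt)
    refine Finset.sum_congr rfl fun w hw => ?_
    have hw1 : w.2 < μ.rowLen w.1 :=
      YoungDiagram.mem_iff_lt_rowLen.mp ((YoungDiagram.mem_cells w).mp hw)
    have hw2 : w.1 < μ.colLen w.2 :=
      YoungDiagram.mem_iff_lt_colLen.mp ((YoungDiagram.mem_cells w).mp hw)
    rw [show A μ w * L μ w
        = ((Finset.Ioo w.2 (μ.rowLen w.1)) ×ˢ (Finset.Ioo w.1 (μ.colLen w.2))).card by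
      rw [Finset.card_product, Nat.card_Ioo, Nat.card_Ioo]
      unfold A L
      congr 1 <;> omega]
    refine Finset.card_nbij' (fun p => (p.1.2, p.2.1))
      (fun q => ((w.1, q.1), (q.2, w.2))) ?_ ?_ ?_ ?_
    · rintro p hp
      obtain ⟨hp1, hfb⟩ := Finset.mem_filter.mp hp
      obtain ⟨hpP, hc⟩ := Finset.mem_filter.mp hp1
      obtain ⟨hr, hcol⟩ := (cls1 _).mp hc
      obtain ⟨hu, hv⟩ := hPmem p hpP
      have e1 : p.1.1 = w.1 := by rw [← hfb]
      have e2 : p.2.2 = w.2 := by rw [← hfb]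
      have m1 : p.1.2 < μ.rowLen p.1.1 := by
        have := (YoungDiagram.mem_cells p.1).mp hu
        exact YoungDiagram.mem_iff_lt_rowLen.mp this
      have m2 : p.2.1 < μ.colLen p.2.2 := by
        have := (YoungDiagram.mem_cells p.2).mp hv
        exact YoungDiagram.mem_iff_lt_colLen.mp this
      rw [e1] at m1
      rw [e2] at m2
      show (p.1.2, p.2.1) ∈ Finset.Ioo w.2 (μ.rowLen w.1) ×ˢ Finset.Ioo w.1 (μ.colLen w.2)
      simp only [Finset.mem_product, Finset.mem_Ioo]
      refine ⟨⟨?_, ?_⟩, ?_, ?_⟩ <;> omega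
    · intro q hq
      rw [Finset.mem_coe, Finset.mem_product, Finset.mem_Ioo, Finset.mem_Ioo] at hq
      obtain ⟨⟨hq1, hq2⟩, hq3, hq4⟩ := hq
      refine Finset.mem_filter.mpr ⟨Finset.mem_filter.mpr ⟨?_, ?_⟩, rfl⟩
      · rw [hPdef, Finset.mem_product]
        constructor
        · exact (YoungDiagram.mem_cells _).mpr (YoungDiagram.mem_iff_lt_rowLen.mpr hq2)
        · exact (YoungDiagram.mem_cells _).mpr (YoungDiagram.mem_iff_lt_colLen.mpr hq4)
      · exact (cls1 _).mpr ⟨hq3, hq1⟩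
    · rintro ⟨⟨a, b⟩, ⟨c, d⟩⟩ hp
      obtain ⟨hp1, hfb⟩ := Finset.mem_filter.mp hp
      have e1 : a = w.1 := by rw [← hfb]
      have e2 : d = w.2 := by rw [← hfb]
      show ((w.1, b), (c, w.2)) = ((a, b), (c, d))
      rw [e1, e2]
    · intro q _; rfl
  -- mirror classes
  have hsw : ∀ k k' : ℕ,
      (∀ p : (ℕ × ℕ) × (ℕ × ℕ), cls (p.2, p.1) = k ↔ cls p = k') →
      (P.filter fun p => cls p = k).card = (P.filter fun p => cls p = k').card := by
    intro k k' hkk'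
    rw [hPdef, card_filter_swap]
    congr 1
    exact Finset.filter_congr fun p _ => hkk' p
  have h3 : (P.filter fun p => cls p = 3).card = (P.filter fun p => cls p = 1).card := by
    refine hsw 3 1 fun p => ?_
    rw [cls3, cls1]
  have h4 : (P.filter fun p => cls p = 4).card = (P.filter fun p => cls p = 0).card := by
    refine hsw 4 0 fun p => ?_
    rw [cls4, cls0]
  have h5 : (P.filter fun p => cls p = 5).card = (P.filter fun p => cls p = 2).card := by
    refine hsw 5 2 fun p => ?_
    rw [cls5, cls2]
    constructor <;> exact fun h => ⟨h.1, h.2.symm⟩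
  have h7 : (P.filter fun p => cls p = 7).card = (P.filter fun p => cls p = 6).card := by
    refine hsw 7 6 fun p => ?_
    rw [cls7, cls6]
    constructor <;> exact fun h => ⟨h.1.symm, h.2⟩
  rw [← hP, hfib]
  rw [show (9 : ℕ) = 8 + 1 from rfl]
  simp only [Finset.sum_range_succ, Finset.sum_range_zero]
  rw [h8, h7, h6, h5, h4, h3, h2c, h1, h0]
  simp only [Finset.sum_add_distrib]
  ring
lemma hook_eq (μ : YoungDiagram) {c : ℕ × ℕ} (hc : c ∈ μ.cells) :
    PaperDefs.hookLen μ c.1 c.2 = A μ c + L μ c + 1 := by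
  have h1 : c.2 < μ.rowLen c.1 :=
    YoungDiagram.mem_iff_lt_rowLen.mp ((YoungDiagram.mem_cells c).mp hc)
  have h2 : c.1 < μ.colLen c.2 :=
    YoungDiagram.mem_iff_lt_colLen.mp ((YoungDiagram.mem_cells c).mp hc)
  unfold PaperDefs.hookLen A L
  omega

end HookAux

end HookAuxSection

open HookAux in
theorem stmt0 (μ : YoungDiagram) :
    (∑ c ∈ μ.cells, (hookLen μ c.1 c.2 : ℤ) ^ 2) - (∑ c ∈ μ.cells, (content c) ^ 2)
      = (μ.card : ℤ) ^ 2 := by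
  classical
  have hA2 : ∑ c ∈ μ.cells, ((A μ c : ℤ)) ^ 2 = ∑ c ∈ μ.cells, ((c.2 : ℤ)) ^ 2 :=
    sum_row_reflect μ (fun x => ((x : ℤ)) ^ 2)
  have hA1 : ∑ c ∈ μ.cells, ((A μ c : ℤ)) = ∑ c ∈ μ.cells, ((c.2 : ℤ)) :=
    sum_row_reflect μ (fun x => ((x : ℤ)))
  have hL2 : ∑ c ∈ μ.cells, ((L μ c : ℤ)) ^ 2 = ∑ c ∈ μ.cells, ((c.1 : ℤ)) ^ 2 :=
    sum_col_reflect μ (fun x => ((x : ℤ)) ^ 2)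
  have hL1 : ∑ c ∈ μ.cells, ((L μ c : ℤ)) = ∑ c ∈ μ.cells, ((c.1 : ℤ)) :=
    sum_col_reflect μ (fun x => ((x : ℤ)))
  have key : ((μ.card : ℤ)) ^ 2 = (μ.card : ℤ)
      + 2 * ∑ c ∈ μ.cells,
          ((c.1 : ℤ) + (c.2 : ℤ) + (c.1 : ℤ) * (c.2 : ℤ) + (A μ c : ℤ) * (L μ c : ℤ)) := by
    exact_mod_cast congrArg (fun n : ℕ => (n : ℤ)) (count_key μ)
  have hcard : ((μ.card : ℤ)) = ∑ c ∈ μ.cells, (1 : ℤ) := by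
    rw [Finset.sum_const, nsmul_eq_mul, mul_one]
  have step1 : (∑ c ∈ μ.cells, (hookLen μ c.1 c.2 : ℤ) ^ 2)
        - (∑ c ∈ μ.cells, (content c) ^ 2)
      = ∑ c ∈ μ.cells,
          (((A μ c : ℤ) + (L μ c : ℤ) + 1) ^ 2 - ((c.2 : ℤ) - (c.1 : ℤ)) ^ 2) := by
    rw [← Finset.sum_sub_distrib]
    refine Finset.sum_congr rfl fun c hc => ?_
    rw [hook_eq μ hc]
    unfold content
    push_cast
    ring
  have split : ∑ c ∈ μ.cells,
          (((A μ c : ℤ) + (L μ c : ℤ) + 1) ^ 2 - ((c.2 : ℤ) - (c.1 : ℤ)) ^ 2)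
      = (∑ c ∈ μ.cells, ((A μ c : ℤ)) ^ 2 - ∑ c ∈ μ.cells, ((c.2 : ℤ)) ^ 2)
        + (∑ c ∈ μ.cells, ((L μ c : ℤ)) ^ 2 - ∑ c ∈ μ.cells, ((c.1 : ℤ)) ^ 2)
        + 2 * (∑ c ∈ μ.cells, ((A μ c : ℤ)) - ∑ c ∈ μ.cells, ((c.2 : ℤ)))
        + 2 * (∑ c ∈ μ.cells, ((L μ c : ℤ)) - ∑ c ∈ μ.cells, ((c.1 : ℤ)))
        + 2 * (∑ c ∈ μ.cells,
            ((c.1 : ℤ) + (c.2 : ℤ) + (c.1 : ℤ) * (c.2 : ℤ) + (A μ c : ℤ) * (L μ c : ℤ)))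
        + ∑ c ∈ μ.cells, (1 : ℤ) := by
    simp only [Finset.mul_sum, ← Finset.sum_sub_distrib, ← Finset.sum_add_distrib]
    exact Finset.sum_congr rfl fun c _ => by ring
  rw [step1, split, ← hcard]
  linear_combination hA2 + hL2 + 2 * hA1 + 2 * hL1 - key
end

section
/- Let λ be a partition with inner corner contents x_0 < x_1 < ⋯ < x_m and outer corner contents y_1 < ⋯ < y_m. Define q_k(λ) = Σ_{i=0}^{m} x_i^k − Σ_{j=1}^{m} y_j^k. Then q_0(λ) = 1, q_1(λ) = 0, and q_2(λ) = 2|λ|. -/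
open Finset

open PaperDefs

namespace Stmt4Aux

lemma rowLen_colLen_self (μ : YoungDiagram) : μ.rowLen (μ.colLen 0) = 0 := by
  by_contra hpos
  have h1 : (μ.colLen 0, 0) ∈ μ := YoungDiagram.mem_iff_lt_rowLen.2 (Nat.pos_of_ne_zero hpos)
  exact lt_irrefl _ (YoungDiagram.mem_iff_lt_colLen.1 h1)

lemma lt_colLen_of_pos (μ : YoungDiagram) {i : ℕ} (h : 0 < μ.rowLen i) : i < μ.colLen 0 :=
  YoungDiagram.mem_iff_lt_colLen.1 (YoungDiagram.mem_iff_lt_rowLen.2 h)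

lemma innerCorner_iff (μ : YoungDiagram) (k : ℤ) :
    InnerCorner μ k ↔ ∃ i : ℕ, (i = 0 ∨ μ.rowLen i < μ.rowLen (i - 1)) ∧
      k = (μ.rowLen i : ℤ) - i := by
  constructor
  · rintro ⟨ν, ⟨i, j⟩, hnot, hcells, hcont⟩
    have hmemν : ∀ c : ℕ × ℕ, c ∈ ν ↔ c = (i, j) ∨ c ∈ μ := by
      intro c
      rw [← YoungDiagram.mem_cells, hcells, Finset.mem_insert, YoungDiagram.mem_cells]
    have hij : (i, j) ∈ ν := (hmemν _).2 (Or.inl rfl)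
    have hnotμ : ¬ j < μ.rowLen i := fun hc => hnot (YoungDiagram.mem_iff_lt_rowLen.2 hc)
    have hje : j = μ.rowLen i := by
      by_contra hne
      have hlt : μ.rowLen i < j := by omega
      have hmem : (i, μ.rowLen i) ∈ ν :=
        ν.isLowerSet (Prod.mk_le_mk.2 ⟨le_refl i, le_of_lt hlt⟩) hij
      rcases (hmemν _).1 hmem with heq | hmem'
      · have : μ.rowLen i = j := congrArg Prod.snd heq
        omega
      · exact absurd (YoungDiagram.mem_iff_lt_rowLen.1 hmem') (lt_irrefl _)
    refine ⟨i, ?_, ?_⟩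
    · by_cases hi0 : i = 0
      · exact Or.inl hi0
      · right
        have hmem : (i - 1, j) ∈ ν :=
          ν.isLowerSet (Prod.mk_le_mk.2 ⟨by omega, le_refl j⟩) hij
        rcases (hmemν _).1 hmem with heq | hmem'
        · have : i - 1 = i := congrArg Prod.fst heq
          omega
        · have := YoungDiagram.mem_iff_lt_rowLen.1 hmem'
          omega
    · rw [← hcont]
      simp [content, hje]
  · rintro ⟨i, hcond, rfl⟩
    have hls : IsLowerSet (↑(insert (i, μ.rowLen i) μ.cells) : Set (ℕ × ℕ)) := by
      rintro ⟨p, q⟩ ⟨a, b⟩ hvu hu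
      simp only [Finset.coe_insert, Set.mem_insert_iff, Finset.mem_coe,
        YoungDiagram.mem_cells] at hu ⊢
      have ha : a ≤ p := hvu.1
      have hb : b ≤ q := hvu.2
      rcases hu with heq | hu
      · have hp : p = i := congrArg Prod.fst heq
        have hq : q = μ.rowLen i := congrArg Prod.snd heq
        by_cases hbi : b < μ.rowLen i
        · exact Or.inr (YoungDiagram.mem_iff_lt_rowLen.2
            (lt_of_lt_of_le hbi (μ.rowLen_anti a i (by omega))))
        · by_cases hai : a = i
          · refine Or.inl ?_
            have hb' : b = μ.rowLen i := by omega
            rw [hai, hb']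
          · have hi0 : i ≠ 0 := by omega
            have hlt : μ.rowLen i < μ.rowLen (i - 1) := hcond.resolve_left hi0
            have hle : μ.rowLen (i - 1) ≤ μ.rowLen a := μ.rowLen_anti a (i - 1) (by omega)
            exact Or.inr (YoungDiagram.mem_iff_lt_rowLen.2 (by omega))
      · exact Or.inr (μ.isLowerSet hvu hu)
    refine ⟨⟨insert (i, μ.rowLen i) μ.cells, hls⟩, (i, μ.rowLen i), ?_, rfl, ?_⟩
    · rw [YoungDiagram.mem_cells, YoungDiagram.mem_iff_lt_rowLen]
      omega
    · simp [content]

lemma outerCorner_iff (μ : YoungDiagram) (k : ℤ) :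
    OuterCorner μ k ↔ ∃ i : ℕ, μ.rowLen (i + 1) < μ.rowLen i ∧
      k = (μ.rowLen i : ℤ) - 1 - i := by
  constructor
  · rintro ⟨ν, ⟨i, j⟩, hnot, hcells, hcont⟩
    have hmemμ : ∀ c : ℕ × ℕ, c ∈ μ ↔ c = (i, j) ∨ c ∈ ν := by
      intro c
      rw [← YoungDiagram.mem_cells, hcells, Finset.mem_insert, YoungDiagram.mem_cells]
    have hij : (i, j) ∈ μ := (hmemμ _).2 (Or.inl rfl)
    have hjlt : j < μ.rowLen i := YoungDiagram.mem_iff_lt_rowLen.1 hij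
    have hnext : (i, j + 1) ∉ μ := by
      intro hc
      rcases (hmemμ _).1 hc with heq | hmem'
      · have : j + 1 = j := congrArg Prod.snd heq
        omega
      · exact hnot (ν.isLowerSet (Prod.mk_le_mk.2 ⟨le_refl i, by omega⟩) hmem')
    have hdown : (i + 1, j) ∉ μ := by
      intro hc
      rcases (hmemμ _).1 hc with heq | hmem'
      · have : i + 1 = i := congrArg Prod.fst heq
        omega
      · exact hnot (ν.isLowerSet (Prod.mk_le_mk.2 ⟨by omega, le_refl j⟩) hmem')
    have h1 : μ.rowLen i ≤ j + 1 := by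
      by_contra hc
      exact hnext (YoungDiagram.mem_iff_lt_rowLen.2 (by omega))
    have h2 : μ.rowLen (i + 1) ≤ j := by
      by_contra hc
      exact hdown (YoungDiagram.mem_iff_lt_rowLen.2 (by omega))
    refine ⟨i, by omega, ?_⟩
    rw [← hcont]
    simp only [content]
    omega
  · rintro ⟨i, hlt, rfl⟩
    have hpos : 0 < μ.rowLen i := by omega
    have hcell : (i, μ.rowLen i - 1) ∈ μ.cells :=
      YoungDiagram.mem_iff_lt_rowLen.2 (by omega)
    have hls : IsLowerSet (↑(μ.cells.erase (i, μ.rowLen i - 1)) : Set (ℕ × ℕ)) := by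
      rintro ⟨p, q⟩ ⟨a, b⟩ hvu hu
      simp only [Finset.coe_erase, Set.mem_diff, Finset.mem_coe, YoungDiagram.mem_cells,
        Set.mem_singleton_iff] at hu ⊢
      obtain ⟨hu1, hu2⟩ := hu
      have ha : a ≤ p := hvu.1
      have hb : b ≤ q := hvu.2
      refine ⟨μ.isLowerSet hvu hu1, ?_⟩
      intro heq
      have hae : a = i := congrArg Prod.fst heq
      have hbe : b = μ.rowLen i - 1 := congrArg Prod.snd heq
      have hq : q < μ.rowLen p := YoungDiagram.mem_iff_lt_rowLen.1 hu1
      have hple : μ.rowLen p ≤ μ.rowLen i := μ.rowLen_anti i p (by omega)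
      have hq' : q = μ.rowLen i - 1 := by omega
      have hpi : p = i := by
        by_contra hne
        have h5 : i + 1 ≤ p := by omega
        have h6 := μ.rowLen_anti (i + 1) p h5
        omega
      exact hu2 (by rw [hpi, hq'])
    refine ⟨⟨μ.cells.erase (i, μ.rowLen i - 1), hls⟩, (i, μ.rowLen i - 1), ?_, ?_, ?_⟩
    · simp
    · exact (Finset.insert_erase hcell).symm
    · simp only [content]
      omega

lemma card_eq_sum (μ : YoungDiagram) :
    (μ.card : ℤ) = ∑ i ∈ Finset.range (μ.colLen 0), (μ.rowLen i : ℤ) := by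
  have hcells : μ.cells = (Finset.range (μ.colLen 0)).biUnion μ.row := by
    ext ⟨a, b⟩
    simp only [Finset.mem_biUnion, Finset.mem_range, YoungDiagram.mem_row_iff,
      YoungDiagram.mem_cells]
    constructor
    · intro hm
      refine ⟨a, ?_, hm, rfl⟩
      have := YoungDiagram.mem_iff_lt_colLen.1 hm
      exact lt_of_lt_of_le this (μ.colLen_anti 0 b (Nat.zero_le b))
    · rintro ⟨i, _, hm, rfl⟩
      exact hm
  have hdisj : ∀ i ∈ Finset.range (μ.colLen 0), ∀ j ∈ Finset.range (μ.colLen 0),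
      i ≠ j → Disjoint (μ.row i) (μ.row j) := by
    intro i _ j _ hij
    rw [Finset.disjoint_left]
    intro c hc hc'
    rw [YoungDiagram.mem_row_iff] at hc hc'
    exact hij (hc.2 ▸ hc'.2 ▸ rfl)
  have : μ.card = ∑ i ∈ Finset.range (μ.colLen 0), (μ.row i).card := by
    rw [YoungDiagram.card, hcells, Finset.card_biUnion hdisj]
  rw [this]
  push_cast
  exact Finset.sum_congr rfl fun i _ => by rw [← μ.rowLen_eq_card]

end Stmt4Aux

open Stmt4Aux in
theorem stmt4 (μ : YoungDiagram) (m : ℕ) (x y : ℕ → ℤ) (h : CornerData μ m x y) :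
    qPow m x y 0 = 1 ∧ qPow m x y 1 = 0 ∧ qPow m x y 2 = 2 * (μ.card : ℤ) := by
  obtain ⟨hx, hy, hxm, hym⟩ := h
  classical
  set n := μ.colLen 0 with hn
  set S : Finset ℕ := (Finset.range n).filter (fun i => μ.rowLen (i + 1) < μ.rowLen i) with hS
  have hSmem : ∀ i : ℕ, i ∈ S ↔ μ.rowLen (i + 1) < μ.rowLen i := by
    intro i
    simp only [hS, Finset.mem_filter, Finset.mem_range, and_iff_right_iff_imp]
    intro hlt
    exact lt_colLen_of_pos μ (by omega)
  set cx : ℕ → ℤ := fun i => (μ.rowLen i : ℤ) - i with hcx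
  set cy : ℕ → ℤ := fun i => (μ.rowLen i : ℤ) - 1 - i with hcy
  set I : Finset ℕ := insert 0 (S.image (· + 1)) with hI
  have hInner : (Finset.range (m + 1)).image x = I.image cx := by
    ext k
    simp only [Finset.mem_image, Finset.mem_range, Nat.lt_succ_iff]
    constructor
    · rintro ⟨i, hi, rfl⟩
      have hic : InnerCorner μ (x i) := (hx (x i)).2 ⟨i, hi, rfl⟩
      rw [innerCorner_iff] at hic
      obtain ⟨r, hcond, hk⟩ := hic
      rcases hcond with rfl | hdrop
      · exact ⟨0, Finset.mem_insert_self _ _, hk.symm⟩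
      · have hr0 : r ≠ 0 := by
          intro h0
          rw [h0] at hdrop
          simp at hdrop
        refine ⟨r, Finset.mem_insert_of_mem (Finset.mem_image.2 ⟨r - 1, ?_, by omega⟩), hk.symm⟩
        rw [hSmem]
        have hre : r - 1 + 1 = r := by omega
        rw [hre]
        exact hdrop
    · rintro ⟨i, hi, rfl⟩
      have hic : InnerCorner μ (cx i) := by
        rw [innerCorner_iff]
        rcases Finset.mem_insert.1 hi with rfl | hmem
        · exact ⟨0, Or.inl rfl, rfl⟩
        · obtain ⟨j, hj, rfl⟩ := Finset.mem_image.1 hmem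
          refine ⟨j + 1, Or.inr ?_, rfl⟩
          simpa using (hSmem j).1 hj
      obtain ⟨i', hi', hxa⟩ := (hx (cx i)).1 hic
      exact ⟨i', hi', hxa⟩
  have hOuter : (Finset.range m).image (fun j => y (j + 1)) = S.image cy := by
    ext k
    constructor
    · intro hk
      obtain ⟨j, hj, rfl⟩ := Finset.mem_image.1 hk
      have hj' : j < m := Finset.mem_range.1 hj
      have hoc : OuterCorner μ (y (j + 1)) := (hy _).2 ⟨j + 1, by omega, by omega, rfl⟩
      rw [outerCorner_iff] at hoc
      obtain ⟨r, hdrop, hk'⟩ := hoc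
      exact Finset.mem_image.2 ⟨r, (hSmem r).2 hdrop, hk'.symm⟩
    · intro hk
      obtain ⟨r, hr, rfl⟩ := Finset.mem_image.1 hk
      have hoc : OuterCorner μ (cy r) := by
        rw [outerCorner_iff]
        exact ⟨r, (hSmem r).1 hr, rfl⟩
      obtain ⟨j, hj1, hj2, hja⟩ := (hy _).1 hoc
      refine Finset.mem_image.2 ⟨j - 1, Finset.mem_range.2 (by omega), ?_⟩
      rw [show j - 1 + 1 = j by omega]
      exact hja
  have hxinj : ∀ i ∈ Finset.range (m + 1), ∀ j ∈ Finset.range (m + 1), x i = x j → i = j := by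
    intro i hi j hj hxy
    simp only [Finset.mem_range, Nat.lt_succ_iff] at hi hj
    rcases lt_trichotomy i j with h' | h' | h'
    · exact absurd hxy (ne_of_lt (hxm i j h' hj))
    · exact h'
    · exact absurd hxy.symm (ne_of_lt (hxm j i h' hi))
  have hyinj : ∀ i ∈ Finset.range m, ∀ j ∈ Finset.range m,
      y (i + 1) = y (j + 1) → i = j := by
    intro i hi j hj hxy
    simp only [Finset.mem_range] at hi hj
    rcases lt_trichotomy i j with h' | h' | h'
    · exact absurd hxy (ne_of_lt (hym (i + 1) (j + 1) (by omega) (by omega) (by omega)))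
    · exact h'
    · exact absurd hxy.symm (ne_of_lt (hym (j + 1) (i + 1) (by omega) (by omega) (by omega)))
  have hcxanti : ∀ i j : ℕ, i < j → cx j < cx i := by
    intro i j hij
    have := μ.rowLen_anti i j (le_of_lt hij)
    simp only [hcx]
    omega
  have hcyanti : ∀ i j : ℕ, i < j → cy j < cy i := by
    intro i j hij
    have := μ.rowLen_anti i j (le_of_lt hij)
    simp only [hcy]
    omega
  have hcxinj : ∀ i ∈ I, ∀ j ∈ I, cx i = cx j → i = j := by
    intro i _ j _ he
    rcases lt_trichotomy i j with h' | h' | h'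
    · exact absurd he (ne_of_gt (hcxanti i j h'))
    · exact h'
    · exact absurd he (ne_of_lt (hcxanti j i h'))
  have hcyinj : ∀ i ∈ S, ∀ j ∈ S, cy i = cy j → i = j := by
    intro i _ j _ he
    rcases lt_trichotomy i j with h' | h' | h'
    · exact absurd he (ne_of_gt (hcyanti i j h'))
    · exact h'
    · exact absurd he (ne_of_lt (hcyanti j i h'))
  have h0notin : (0 : ℕ) ∉ S.image (· + 1) := by simp
  have hSsub : S ⊆ Finset.range n := by
    rw [hS]; exact Finset.filter_subset _ _
  have key : ∀ k : ℕ, qPow m x y k = cx 0 ^ k + ∑ i ∈ S, (cx (i + 1) ^ k - cy i ^ k) := by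
    intro k
    have e1 : ∑ i ∈ Finset.range (m + 1), x i ^ k = ∑ i ∈ I, cx i ^ k := by
      rw [← Finset.sum_image (f := fun z : ℤ => z ^ k) hxinj, hInner,
        Finset.sum_image (f := fun z : ℤ => z ^ k) hcxinj]
    have e2 : ∑ j ∈ Finset.range m, y (j + 1) ^ k = ∑ i ∈ S, cy i ^ k := by
      rw [← Finset.sum_image (f := fun z : ℤ => z ^ k) hyinj, hOuter,
        Finset.sum_image (f := fun z : ℤ => z ^ k) hcyinj]
    have e3 : ∑ i ∈ I, cx i ^ k = cx 0 ^ k + ∑ i ∈ S, cx (i + 1) ^ k := by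
      rw [hI, Finset.sum_insert h0notin,
        Finset.sum_image (f := fun i => cx i ^ k) (fun a _ b _ hab => by omega)]
    rw [qPow, e1, e2, e3, Finset.sum_sub_distrib]
    ring
  have hrowlenn : μ.rowLen n = 0 := rowLen_colLen_self μ
  refine ⟨?_, ?_, ?_⟩
  · rw [key 0]
    simp
  · rw [key 1]
    have hterm : ∀ i ∈ S, cx (i + 1) ^ 1 - cy i ^ 1
        = (μ.rowLen (i + 1) : ℤ) - μ.rowLen i := by
      intro i _
      simp only [hcx, hcy, pow_one]
      push_cast
      ring
    rw [Finset.sum_congr rfl hterm]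
    have hpad : ∑ i ∈ S, ((μ.rowLen (i + 1) : ℤ) - μ.rowLen i)
        = ∑ i ∈ Finset.range n, ((μ.rowLen (i + 1) : ℤ) - μ.rowLen i) := by
      apply Finset.sum_subset hSsub
      intro i _ hni
      have h1 : ¬ μ.rowLen (i + 1) < μ.rowLen i := fun hc => hni ((hSmem i).2 hc)
      have h2 := μ.rowLen_anti i (i + 1) (by omega)
      have h3 : μ.rowLen (i + 1) = μ.rowLen i := by omega
      rw [h3]
      ring
    rw [hpad, Finset.sum_range_sub (fun i => (μ.rowLen i : ℤ))]
    simp only [hcx, hrowlenn, pow_one]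
    push_cast
    ring
  · rw [key 2]
    have hpad : ∑ i ∈ S, (cx (i + 1) ^ 2 - cy i ^ 2)
        = ∑ i ∈ Finset.range n, (cx (i + 1) ^ 2 - cy i ^ 2) := by
      apply Finset.sum_subset hSsub
      intro i _ hni
      have h1 : ¬ μ.rowLen (i + 1) < μ.rowLen i := fun hc => hni ((hSmem i).2 hc)
      have h2 := μ.rowLen_anti i (i + 1) (by omega)
      have h3 : μ.rowLen (i + 1) = μ.rowLen i := by omega
      have h4 : cx (i + 1) = cy i := by
        simp only [hcx, hcy, h3]
        push_cast
        ring
      rw [h4]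
      ring
    rw [hpad]
    have hsplit : ∀ i ∈ Finset.range n, cx (i + 1) ^ 2 - cy i ^ 2
        = (cx (i + 1) ^ 2 - cx i ^ 2) + (2 * cx i - 1) := by
      intro i _
      have h4 : cy i = cx i - 1 := by
        simp only [hcx, hcy]
        ring
      rw [h4]
      ring
    rw [Finset.sum_congr rfl hsplit, Finset.sum_add_distrib,
      Finset.sum_range_sub (fun i => cx i ^ 2)]
    have hsq : ∑ i ∈ Finset.range n, (2 * (i : ℤ) + 1) = (n : ℤ) ^ 2 := by
      have ht := Finset.sum_range_sub (fun i : ℕ => ((i : ℤ)) ^ 2) n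
      calc ∑ i ∈ Finset.range n, (2 * (i : ℤ) + 1)
          = ∑ i ∈ Finset.range n, ((((i + 1 : ℕ) : ℤ)) ^ 2 - ((i : ℤ)) ^ 2) := by
            refine Finset.sum_congr rfl fun i _ => ?_
            push_cast
            ring
        _ = ((n : ℤ)) ^ 2 - ((0 : ℕ) : ℤ) ^ 2 := ht
        _ = (n : ℤ) ^ 2 := by push_cast; ring
    have hlin : ∑ i ∈ Finset.range n, (2 * cx i - 1)
        = 2 * (μ.card : ℤ) - (n : ℤ) ^ 2 := by
      have : ∀ i ∈ Finset.range n, 2 * cx i - 1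
          = 2 * (μ.rowLen i : ℤ) - (2 * (i : ℤ) + 1) := by
        intro i _
        simp only [hcx]
        ring
      rw [Finset.sum_congr rfl this, Finset.sum_sub_distrib, hsq, ← Finset.mul_sum,
        ← card_eq_sum μ]
    rw [hlin]
    have hcxn : cx n = -(n : ℤ) := by
      simp only [hcx, hrowlenn]
      push_cast
      ring
    rw [hcxn]
    ring
end

section
/- Let λ be a partition with inner corner contents x_0,…,x_m and outer corner contents y_1,…,y_m, let k be a nonnegative integer, and let λ^{i+} = λ ∪ {□_i} be the partition obtained by adding a box at the inner corner of content x_i. Then q_k(λ^{i+}) − q_k(λ) = Σ_{1 ≤ j ≤ k/2} 2·C(k,2j)·x_i^{k−2j}, where q_k(ν) denotes Σ over inner corner contents of ν of the k-th power minus Σ over outer corner contents of ν of the k-th power. -/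
open Finset

open PaperDefs

namespace Stmt5Aux
open PaperDefs Finset

/-! ### Addable and removable cells -/

def Addable (μ : YoungDiagram) (p : ℕ × ℕ) : Prop :=
  p ∉ μ ∧ IsLowerSet (insert p (μ.cells : Set (ℕ × ℕ)))

def Removable (μ : YoungDiagram) (q : ℕ × ℕ) : Prop :=
  q ∈ μ ∧ (q.1 + 1, q.2) ∉ μ ∧ (q.1, q.2 + 1) ∉ μ

lemma Addable.mem' {μ : YoungDiagram} {p : ℕ × ℕ} (h : Addable μ p) {i j : ℕ}
    (hi : i ≤ p.1) (hj : j ≤ p.2) (hne : (i, j) ≠ p) : (i, j) ∈ μ := by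
  have hle : ((i, j) : ℕ × ℕ) ≤ p := ⟨hi, hj⟩
  have := h.2 hle (Set.mem_insert p _)
  rcases this with h' | h'
  · exact absurd h' hne
  · simpa using h'

lemma Addable.fst_cond {μ : YoungDiagram} {p : ℕ × ℕ} (h : Addable μ p) :
    p.1 = 0 ∨ (p.1 - 1, p.2) ∈ μ := by
  rcases Nat.eq_zero_or_pos p.1 with h0 | h0
  · exact Or.inl h0
  · refine Or.inr (h.mem' (by omega) le_rfl ?_)
    intro he
    have := congrArg Prod.fst he
    simp at this; omega

lemma Addable.snd_cond {μ : YoungDiagram} {p : ℕ × ℕ} (h : Addable μ p) :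
    p.2 = 0 ∨ (p.1, p.2 - 1) ∈ μ := by
  rcases Nat.eq_zero_or_pos p.2 with h0 | h0
  · exact Or.inl h0
  · refine Or.inr (h.mem' le_rfl (by omega) ?_)
    intro he
    have := congrArg Prod.snd he
    simp at this; omega

lemma addable_mk {μ : YoungDiagram} {p : ℕ × ℕ} (hp : p ∉ μ)
    (h1 : p.1 = 0 ∨ (p.1 - 1, p.2) ∈ μ) (h2 : p.2 = 0 ∨ (p.1, p.2 - 1) ∈ μ) :
    Addable μ p := by
  refine ⟨hp, ?_⟩
  intro a b hle ha
  rcases ha with rfl | ha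
  swap
  · exact Set.mem_insert_of_mem _ (μ.isLowerSet hle ha)
  · by_cases hb : b = a
    · exact hb ▸ Set.mem_insert _ _
    · have hco : b.1 < a.1 ∨ b.2 < a.2 := by
        rcases hle with ⟨hc1, hc2⟩
        rcases Nat.lt_or_ge b.1 a.1 with h | h
        · exact Or.inl h
        · have : b.1 = a.1 := le_antisymm hc1 h
          right
          rcases Nat.lt_or_ge b.2 a.2 with h' | h'
          · exact h'
          · exact absurd (Prod.ext this (le_antisymm hc2 h')) hb
      right
      rcases hco with hco | hco
      · rcases h1 with h0 | hmem
        · omega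
        · exact Finset.mem_coe.mpr ((YoungDiagram.mem_cells _).mpr
            (μ.up_left_mem (by omega) hle.2 hmem))
      · rcases h2 with h0 | hmem
        · omega
        · exact Finset.mem_coe.mpr ((YoungDiagram.mem_cells _).mpr
            (μ.up_left_mem hle.1 (by omega) hmem))

lemma addable_of_cells {μ ν : YoungDiagram} {p : ℕ × ℕ} (hp : p ∉ μ)
    (hc : ν.cells = insert p μ.cells) : Addable μ p := by
  refine ⟨hp, ?_⟩
  have := ν.isLowerSet
  rw [hc, Finset.coe_insert] at this
  exact this

lemma removable_of_cells {μ ν : YoungDiagram} {p : ℕ × ℕ} (hp : p ∉ μ)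
    (hc : ν.cells = insert p μ.cells) : Removable ν p := by
  have hmem : ∀ q : ℕ × ℕ, q ∈ ν ↔ q = p ∨ q ∈ μ := by
    intro q
    rw [← YoungDiagram.mem_cells, hc, Finset.mem_insert, YoungDiagram.mem_cells]
  refine ⟨(hmem p).mpr (Or.inl rfl), ?_, ?_⟩
  · intro hm
    rcases (hmem _).mp hm with he | hμ
    · have := congrArg Prod.fst he; simp at this
    · exact hp (μ.up_left_mem (by omega) le_rfl hμ)
  · intro hm
    rcases (hmem _).mp hm with he | hμ
    · have := congrArg Prod.snd he; simp at this
    · exact hp (μ.up_left_mem le_rfl (by omega) hμ)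

lemma innerCorner_iff {μ : YoungDiagram} {t : ℤ} :
    InnerCorner μ t ↔ ∃ p, Addable μ p ∧ content p = t := by
  constructor
  · rintro ⟨ν, p, hp, hc, hct⟩
    rw [YoungDiagram.mem_cells] at hp
    exact ⟨p, addable_of_cells hp hc, hct⟩
  · rintro ⟨p, hA, hct⟩
    refine ⟨⟨insert p μ.cells, ?_⟩, p, ?_, rfl, hct⟩
    · rw [Finset.coe_insert]; exact hA.2
    · rw [YoungDiagram.mem_cells]; exact hA.1

lemma outerCorner_iff {μ : YoungDiagram} {t : ℤ} :
    OuterCorner μ t ↔ ∃ q, Removable μ q ∧ content q = t := by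
  constructor
  · rintro ⟨ρ, p, hp, hc, hct⟩
    rw [YoungDiagram.mem_cells] at hp
    exact ⟨p, removable_of_cells hp hc, hct⟩
  · rintro ⟨q, hR, hct⟩
    have hlow : IsLowerSet ((μ.cells.erase q : Finset (ℕ × ℕ)) : Set (ℕ × ℕ)) := by
      intro a b hle ha
      simp only [Finset.coe_erase, Set.mem_diff, Finset.mem_coe, Set.mem_singleton_iff] at ha ⊢
      obtain ⟨haμ, hane⟩ := ha
      rw [YoungDiagram.mem_cells] at haμ
      refine ⟨(YoungDiagram.mem_cells _).mpr (μ.isLowerSet hle haμ), ?_⟩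
      rintro rfl
      have hco : b.1 < a.1 ∨ b.2 < a.2 := by
        rcases hle with ⟨h1, h2⟩
        rcases Nat.lt_or_ge b.1 a.1 with h | h
        · exact Or.inl h
        · right
          rcases Nat.lt_or_ge b.2 a.2 with h' | h'
          · exact h'
          · exact absurd (Prod.ext (le_antisymm h1 h) (le_antisymm h2 h')).symm hane
      rcases hco with hco | hco
      · exact hR.2.1 (μ.up_left_mem (by omega) hle.2 haμ)
      · exact hR.2.2 (μ.up_left_mem hle.1 (by omega) haμ)
    refine ⟨⟨μ.cells.erase q, hlow⟩, q, ?_, ?_, hct⟩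
    · simp
    · simp only [YoungDiagram.cells]
      rw [Finset.insert_erase]
      rw [YoungDiagram.mem_cells] at *
      exact hR.1

/-! ### Incompatibilities on a diagonal -/

lemma not_addable_removable {μ : YoungDiagram} {p q : ℕ × ℕ}
    (hp : Addable μ p) (hq : Removable μ q) (h : content p = content q) : False := by
  have hc : (p.2 : ℤ) - p.1 = (q.2 : ℤ) - q.1 := h
  have h1 : q.1 < p.1 := by
    by_contra hle
    push_neg at hle
    exact hp.1 (μ.up_left_mem hle (by omega) hq.1)
  refine hq.2.2 (hp.mem' (i := q.1) (j := q.2 + 1) (by omega) (by omega) ?_)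
  intro he
  have := congrArg Prod.fst he; simp at this; omega

lemma not_addable_adjacent {μ : YoungDiagram} {p q : ℕ × ℕ}
    (hp : Addable μ p) (hq : Addable μ q) (h : content q = content p + 1) : False := by
  have hc : (q.2 : ℤ) - q.1 = (p.2 : ℤ) - p.1 + 1 := h
  have h1 : q.1 + 1 ≤ p.1 := by
    rcases hq.snd_cond with h0 | hmem
    · omega
    · by_contra hle
      push_neg at hle
      exact hp.1 (μ.up_left_mem (by omega) (by omega) hmem)
  rcases hp.fst_cond with h0 | hmem
  · omega
  · exact hq.1 (μ.up_left_mem (by omega) (by omega) hmem)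

end Stmt5Aux
namespace Stmt5Aux
open PaperDefs Finset

section Transfer

variable {μ ν : YoungDiagram} {cl : ℕ × ℕ}

lemma mem_nu_iff (hcells : ν.cells = insert cl μ.cells) (q : ℕ × ℕ) :
    q ∈ ν ↔ q = cl ∨ q ∈ μ := by
  rw [← YoungDiagram.mem_cells, hcells, Finset.mem_insert, YoungDiagram.mem_cells]

lemma mem_nu_of_mem (hcells : ν.cells = insert cl μ.cells) {q : ℕ × ℕ} (hq : q ∈ μ) :
    q ∈ ν := (mem_nu_iff hcells q).mpr (Or.inr hq)

lemma cl_mem_nu (hcells : ν.cells = insert cl μ.cells) : cl ∈ ν :=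
  (mem_nu_iff hcells cl).mpr (Or.inl rfl)

/-- generic upward inner transfer -/
lemma inner_up (hcl : cl ∉ μ) (hcells : ν.cells = insert cl μ.cells) {t : ℤ}
    (ht : t ≠ content cl) (hI : InnerCorner μ t) : InnerCorner ν t := by
  obtain ⟨p, hp, hpt⟩ := innerCorner_iff.mp hI
  refine innerCorner_iff.mpr ⟨p, addable_mk ?_ ?_ ?_, hpt⟩
  · intro hmem
    rcases (mem_nu_iff hcells p).mp hmem with rfl | hmem'
    · exact ht (hpt.symm ▸ rfl)
    · exact hp.1 hmem'
  · rcases hp.fst_cond with h0 | hm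
    · exact Or.inl h0
    · exact Or.inr (mem_nu_of_mem hcells hm)
  · rcases hp.snd_cond with h0 | hm
    · exact Or.inl h0
    · exact Or.inr (mem_nu_of_mem hcells hm)

/-- generic downward inner transfer -/
lemma inner_down (hcl : cl ∉ μ) (hcells : ν.cells = insert cl μ.cells) {t : ℤ}
    (ht : t ≠ content cl) (ht1 : t ≠ content cl - 1) (ht2 : t ≠ content cl + 1)
    (hI : InnerCorner ν t) : InnerCorner μ t := by
  obtain ⟨p, hp, hpt⟩ := innerCorner_iff.mp hI
  have hclc : (cl.2 : ℤ) - cl.1 = content cl := rfl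
  have hpc : (p.2 : ℤ) - p.1 = t := hpt
  refine innerCorner_iff.mpr ⟨p, addable_mk ?_ ?_ ?_, hpt⟩
  · exact fun hm => hp.1 (mem_nu_of_mem hcells hm)
  · rcases hp.fst_cond with h0 | hm
    · exact Or.inl h0
    · rcases Nat.eq_zero_or_pos p.1 with h0 | h0
      · exact Or.inl h0
      refine Or.inr ?_
      rcases (mem_nu_iff hcells _).mp hm with he | hm'
      · exfalso
        have h1 := congrArg Prod.fst he
        have h2 := congrArg Prod.snd he
        simp only at h1 h2
        apply ht2
        rw [← hclc, ← hpc, ← h1, ← h2]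
        push_cast
        omega
      · exact hm'
  · rcases hp.snd_cond with h0 | hm
    · exact Or.inl h0
    · rcases Nat.eq_zero_or_pos p.2 with h0 | h0
      · exact Or.inl h0
      refine Or.inr ?_
      rcases (mem_nu_iff hcells _).mp hm with he | hm'
      · exfalso
        have h1 := congrArg Prod.fst he
        have h2 := congrArg Prod.snd he
        simp only at h1 h2
        apply ht1
        rw [← hclc, ← hpc, ← h1, ← h2]
        push_cast
        omega
      · exact hm'

/-- generic downward outer transfer -/
lemma outer_down (hcl : cl ∉ μ) (hcells : ν.cells = insert cl μ.cells) {t : ℤ}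
    (ht : t ≠ content cl) (hO : OuterCorner ν t) : OuterCorner μ t := by
  obtain ⟨q, hq, hqt⟩ := outerCorner_iff.mp hO
  have hne : q ≠ cl := by
    rintro rfl; exact ht hqt.symm
  refine outerCorner_iff.mpr ⟨q, ⟨?_, ?_, ?_⟩, hqt⟩
  · rcases (mem_nu_iff hcells q).mp hq.1 with he | hm
    · exact absurd he hne
    · exact hm
  · exact fun hm => hq.2.1 (mem_nu_of_mem hcells hm)
  · exact fun hm => hq.2.2 (mem_nu_of_mem hcells hm)

/-- generic upward outer transfer -/
lemma outer_up (hcl : cl ∉ μ) (hcells : ν.cells = insert cl μ.cells) {t : ℤ}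
    (ht1 : t ≠ content cl - 1) (ht2 : t ≠ content cl + 1)
    (hO : OuterCorner μ t) : OuterCorner ν t := by
  obtain ⟨q, hq, hqt⟩ := outerCorner_iff.mp hO
  have hclc : (cl.2 : ℤ) - cl.1 = content cl := rfl
  have hqc : (q.2 : ℤ) - q.1 = t := hqt
  refine outerCorner_iff.mpr ⟨q, ⟨mem_nu_of_mem hcells hq.1, ?_, ?_⟩, hqt⟩
  · intro hm
    rcases (mem_nu_iff hcells _).mp hm with he | hm'
    · have h1 := congrArg Prod.fst he
      have h2 := congrArg Prod.snd he
      simp only at h1 h2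
      apply ht2
      rw [← hclc, ← h1, ← h2]
      push_cast
      omega
    · exact hq.2.1 hm'
  · intro hm
    rcases (mem_nu_iff hcells _).mp hm with he | hm'
    · have h1 := congrArg Prod.fst he
      have h2 := congrArg Prod.snd he
      simp only at h1 h2
      apply ht1
      rw [← hclc, ← h1, ← h2]
      push_cast
      omega
    · exact hq.2.2 hm'

end Transfer

end Stmt5Aux
namespace Stmt5Aux
open PaperDefs Finset

section Corners

variable {μ ν : YoungDiagram} {cl : ℕ × ℕ}

lemma not_inner_nu_c (hcl : cl ∉ μ) (hcells : ν.cells = insert cl μ.cells) :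
    ¬ InnerCorner ν (content cl) := by
  rintro hI
  obtain ⟨p, hp, hpt⟩ := innerCorner_iff.mp hI
  exact not_addable_removable hp (removable_of_cells hcl hcells) hpt

lemma outer_nu_c (hcl : cl ∉ μ) (hcells : ν.cells = insert cl μ.cells) :
    OuterCorner ν (content cl) :=
  ⟨μ, cl, by rwa [YoungDiagram.mem_cells], hcells, rfl⟩

lemma not_outer_mu_c (hcl : cl ∉ μ) (hcells : ν.cells = insert cl μ.cells) :
    ¬ OuterCorner μ (content cl) := by
  rintro hO
  obtain ⟨q, hq, hqt⟩ := outerCorner_iff.mp hO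
  exact not_addable_removable (addable_of_cells hcl hcells) hq hqt.symm

lemma not_inner_mu_cp1 (hcl : cl ∉ μ) (hcells : ν.cells = insert cl μ.cells) :
    ¬ InnerCorner μ (content cl + 1) := by
  rintro hI
  obtain ⟨p, hp, hpt⟩ := innerCorner_iff.mp hI
  exact not_addable_adjacent (addable_of_cells hcl hcells) hp hpt

lemma not_inner_mu_cm1 (hcl : cl ∉ μ) (hcells : ν.cells = insert cl μ.cells) :
    ¬ InnerCorner μ (content cl - 1) := by
  rintro hI
  obtain ⟨p, hp, hpt⟩ := innerCorner_iff.mp hI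
  refine not_addable_adjacent hp (addable_of_cells hcl hcells) ?_
  rw [hpt]; ring

lemma not_outer_nu_cp1 (hcl : cl ∉ μ) (hcells : ν.cells = insert cl μ.cells) :
    ¬ OuterCorner ν (content cl + 1) := by
  rintro hO
  obtain ⟨q, hq, hqt⟩ := outerCorner_iff.mp hO
  have hqc : (q.2 : ℤ) - q.1 = ((cl.2 : ℤ) - cl.1) + 1 := hqt
  have h1 : q.1 < cl.1 := by
    by_contra hle
    push_neg at hle
    have hm : (cl.1, cl.2 + 1) ∈ ν := ν.up_left_mem hle (by omega) hq.1
    rcases (mem_nu_iff hcells _).mp hm with he | hm'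
    · have := congrArg Prod.snd he; simp at this
    · exact hcl (μ.up_left_mem le_rfl (by omega) hm')
  exact hq.2.1 (ν.up_left_mem (show q.1 + 1 ≤ cl.1 by omega) (show q.2 ≤ cl.2 by omega)
    (cl_mem_nu hcells))

lemma not_outer_nu_cm1 (hcl : cl ∉ μ) (hcells : ν.cells = insert cl μ.cells) :
    ¬ OuterCorner ν (content cl - 1) := by
  rintro hO
  obtain ⟨q, hq, hqt⟩ := outerCorner_iff.mp hO
  have hqc : (q.2 : ℤ) - q.1 = ((cl.2 : ℤ) - cl.1) - 1 := hqt
  have h1 : q.1 ≤ cl.1 := by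
    by_contra hle
    push_neg at hle
    have hm : (cl.1 + 1, cl.2) ∈ ν := ν.up_left_mem (by omega) (by omega) hq.1
    rcases (mem_nu_iff hcells _).mp hm with he | hm'
    · have := congrArg Prod.fst he; simp at this
    · exact hcl (μ.up_left_mem (by omega) le_rfl hm')
  exact hq.2.2 (ν.up_left_mem h1 (show q.2 + 1 ≤ cl.2 by omega) (cl_mem_nu hcells))

lemma inner_nu_cp1 (hcl : cl ∉ μ) (hcells : ν.cells = insert cl μ.cells) :
    InnerCorner ν (content cl + 1) ↔ ¬ OuterCorner μ (content cl + 1) := by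
  have hAcl : Addable μ cl := addable_of_cells hcl hcells
  constructor
  · rintro hI hO
    obtain ⟨p, hp, hpt⟩ := innerCorner_iff.mp hI
    obtain ⟨q, hq, hqt⟩ := outerCorner_iff.mp hO
    have hpc : (p.2 : ℤ) - p.1 = ((cl.2 : ℤ) - cl.1) + 1 := hpt
    have hqc : (q.2 : ℤ) - q.1 = ((cl.2 : ℤ) - cl.1) + 1 := hqt
    have h1 : q.1 < cl.1 := by
      by_contra hle
      push_neg at hle
      exact hcl (μ.up_left_mem hle (by omega) hq.1)
    have h2 : cl.1 ≤ q.1 + 1 := by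
      by_contra hle
      push_neg at hle
      refine hq.2.1 (hAcl.mem' (by omega) (by omega) ?_)
      intro he
      have := congrArg Prod.fst he; simp at this; omega
    have hq1 : q.1 = cl.1 - 1 := by omega
    have hq2 : q.2 = cl.2 := by omega
    have hp1 : cl.1 ≤ p.1 := by
      by_contra hle
      push_neg at hle
      exact hp.1 (ν.up_left_mem (show p.1 ≤ q.1 by omega) (show p.2 ≤ q.2 by omega)
        (mem_nu_of_mem hcells hq.1))
    have hp2 : p.1 ≤ cl.1 := by
      by_contra hle
      push_neg at hle
      have hl : (p.1, p.2 - 1) ∈ ν := by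
        refine hp.mem' le_rfl (by omega) ?_
        intro he
        have := congrArg Prod.snd he; simp at this; omega
      have hm : (cl.1 + 1, cl.2) ∈ ν := ν.up_left_mem (by omega) (by omega) hl
      rcases (mem_nu_iff hcells _).mp hm with he | hm'
      · have := congrArg Prod.fst he; simp at this
      · exact hcl (μ.up_left_mem (by omega) le_rfl hm')
    have hup : (p.1 - 1, p.2) ∈ ν := by
      refine hp.mem' (by omega) le_rfl ?_
      intro he
      have := congrArg Prod.fst he; simp at this; omega
    have hup' : (p.1 - 1, p.2) ∈ μ := by
      rcases (mem_nu_iff hcells _).mp hup with he | hm'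
      · exfalso
        have e1 := congrArg Prod.fst he
        have e2 := congrArg Prod.snd he
        simp only at e1 e2
        omega
      · exact hm'
    apply hq.2.2
    have heq : (q.1, q.2 + 1) = ((p.1 - 1 : ℕ), p.2) := Prod.ext (by omega) (by omega)
    rw [heq]
    exact hup'
  · intro hO
    refine innerCorner_iff.mpr ⟨(cl.1, cl.2 + 1), addable_mk ?_ ?_ ?_, ?_⟩
    · intro hm
      rcases (mem_nu_iff hcells _).mp hm with he | hm'
      · have := congrArg Prod.snd he; simp at this
      · exact hcl (μ.up_left_mem le_rfl (by omega) hm')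
    · rcases Nat.eq_zero_or_pos cl.1 with h0 | h0
      · exact Or.inl h0
      refine Or.inr ?_
      by_cases hb : ((cl.1 : ℕ) - 1, cl.2 + 1) ∈ μ
      · exact mem_nu_of_mem hcells hb
      · exfalso
        apply hO
        refine outerCorner_iff.mpr ⟨(cl.1 - 1, cl.2), ⟨?_, ?_, hb⟩, ?_⟩
        · refine hAcl.mem' (by omega) le_rfl ?_
          intro he
          have := congrArg Prod.fst he; simp at this; omega
        · have heq : ((cl.1 : ℕ) - 1 + 1, cl.2) = cl := Prod.ext (by omega) rfl
          rw [heq]; exact hcl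
        · show ((cl.2 : ℤ)) - ((cl.1 : ℕ) - 1 : ℕ) = ((cl.2 : ℤ) - cl.1) + 1
          push_cast [h0]
          omega
    · exact Or.inr (by simpa using cl_mem_nu hcells)
    · show ((cl.2 : ℤ) + 1) - cl.1 = ((cl.2 : ℤ) - cl.1) + 1
      ring

lemma inner_nu_cm1 (hcl : cl ∉ μ) (hcells : ν.cells = insert cl μ.cells) :
    InnerCorner ν (content cl - 1) ↔ ¬ OuterCorner μ (content cl - 1) := by
  have hAcl : Addable μ cl := addable_of_cells hcl hcells
  constructor
  · rintro hI hO
    obtain ⟨p, hp, hpt⟩ := innerCorner_iff.mp hI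
    obtain ⟨q, hq, hqt⟩ := outerCorner_iff.mp hO
    have hpc : (p.2 : ℤ) - p.1 = ((cl.2 : ℤ) - cl.1) - 1 := hpt
    have hqc : (q.2 : ℤ) - q.1 = ((cl.2 : ℤ) - cl.1) - 1 := hqt
    have h1 : q.1 ≤ cl.1 := by
      by_contra hle
      push_neg at hle
      exact hcl (μ.up_left_mem (by omega) (by omega) hq.1)
    have h2 : cl.1 ≤ q.1 := by
      by_contra hle
      push_neg at hle
      refine hq.2.2 (hAcl.mem' (by omega) (by omega) ?_)
      intro he
      have := congrArg Prod.fst he; simp at this; omega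
    have hq1 : q.1 = cl.1 := by omega
    have hq2 : q.2 + 1 = cl.2 := by omega
    have hp1 : cl.1 + 1 ≤ p.1 := by
      by_contra hle
      push_neg at hle
      exact hp.1 (ν.up_left_mem (show p.1 ≤ q.1 by omega) (show p.2 ≤ q.2 by omega)
        (mem_nu_of_mem hcells hq.1))
    have hp2 : p.1 ≤ cl.1 + 1 := by
      by_contra hle
      push_neg at hle
      have hu : (p.1 - 1, p.2) ∈ ν := by
        refine hp.mem' (by omega) le_rfl ?_
        intro he
        have := congrArg Prod.fst he; simp at this; omega
      have hm : (cl.1 + 1, cl.2) ∈ ν := ν.up_left_mem (by omega) (by omega) hu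
      rcases (mem_nu_iff hcells _).mp hm with he | hm'
      · have := congrArg Prod.fst he; simp at this
      · exact hcl (μ.up_left_mem (by omega) le_rfl hm')
    have hl : (p.1, p.2 - 1) ∈ ν := by
      refine hp.mem' le_rfl (by omega) ?_
      intro he
      have := congrArg Prod.snd he; simp at this; omega
    have hl' : (p.1, p.2 - 1) ∈ μ := by
      rcases (mem_nu_iff hcells _).mp hl with he | hm'
      · exfalso
        have e1 := congrArg Prod.fst he
        simp only at e1
        omega
      · exact hm'
    apply hq.2.1
    have heq : (q.1 + 1, q.2) = (p.1, (p.2 - 1 : ℕ)) := Prod.ext (by omega) (by omega)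
    rw [heq]
    exact hl'
  · intro hO
    refine innerCorner_iff.mpr ⟨(cl.1 + 1, cl.2), addable_mk ?_ ?_ ?_, ?_⟩
    · intro hm
      rcases (mem_nu_iff hcells _).mp hm with he | hm'
      · have := congrArg Prod.fst he; simp at this
      · exact hcl (μ.up_left_mem (by omega) le_rfl hm')
    · refine Or.inr ?_
      have heq : ((cl.1 + 1 : ℕ) - 1, cl.2) = cl := Prod.ext (by omega) rfl
      rw [heq]; exact cl_mem_nu hcells
    · rcases Nat.eq_zero_or_pos cl.2 with h0 | h0
      · exact Or.inl h0
      refine Or.inr ?_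
      by_cases hb : (cl.1 + 1, (cl.2 : ℕ) - 1) ∈ μ
      · exact mem_nu_of_mem hcells hb
      · exfalso
        apply hO
        refine outerCorner_iff.mpr ⟨(cl.1, cl.2 - 1), ⟨?_, hb, ?_⟩, ?_⟩
        · refine hAcl.mem' le_rfl (by omega) ?_
          intro he
          have := congrArg Prod.snd he; simp at this; omega
        · have heq : (cl.1, (cl.2 : ℕ) - 1 + 1) = cl := Prod.ext rfl (by omega)
          rw [heq]; exact hcl
        · show (((cl.2 : ℕ) - 1 : ℕ) : ℤ) - cl.1 = ((cl.2 : ℤ) - cl.1) - 1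
          push_cast [h0]
          omega
    · show ((cl.2 : ℤ)) - ((cl.1 : ℤ) + 1) = ((cl.2 : ℤ) - cl.1) - 1
      ring

end Corners

end Stmt5Aux
namespace Stmt5Aux
open PaperDefs Finset

section Assemble

variable {μ ν : YoungDiagram} {cl : ℕ × ℕ}

lemma inner_nu_iff (hcl : cl ∉ μ) (hcells : ν.cells = insert cl μ.cells) (t : ℤ) :
    InnerCorner ν t ↔ (InnerCorner μ t ∧ t ≠ content cl) ∨
      (t = content cl - 1 ∧ ¬ OuterCorner μ (content cl - 1)) ∨
      (t = content cl + 1 ∧ ¬ OuterCorner μ (content cl + 1)) := by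
  by_cases h1 : t = content cl
  · subst h1
    constructor
    · exact fun hI => absurd hI (not_inner_nu_c hcl hcells)
    · rintro (⟨_, hne⟩ | ⟨he, _⟩ | ⟨he, _⟩)
      · exact absurd rfl hne
      · omega
      · omega
  by_cases h2 : t = content cl - 1
  · subst h2
    rw [inner_nu_cm1 hcl hcells]
    constructor
    · intro hO; exact Or.inr (Or.inl ⟨rfl, hO⟩)
    · rintro (⟨hI, _⟩ | ⟨_, hO⟩ | ⟨he, _⟩)
      · exact absurd hI (not_inner_mu_cm1 hcl hcells)
      · exact hO
      · omega
  by_cases h3 : t = content cl + 1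
  · subst h3
    rw [inner_nu_cp1 hcl hcells]
    constructor
    · intro hO; exact Or.inr (Or.inr ⟨rfl, hO⟩)
    · rintro (⟨hI, _⟩ | ⟨he, _⟩ | ⟨_, hO⟩)
      · exact absurd hI (not_inner_mu_cp1 hcl hcells)
      · omega
      · exact hO
  · constructor
    · intro hI; exact Or.inl ⟨inner_down hcl hcells h1 h2 h3 hI, h1⟩
    · rintro (⟨hI, _⟩ | ⟨he, _⟩ | ⟨he, _⟩)
      · exact inner_up hcl hcells h1 hI
      · exact absurd he h2
      · exact absurd he h3

lemma outer_nu_iff (hcl : cl ∉ μ) (hcells : ν.cells = insert cl μ.cells) (t : ℤ) :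
    OuterCorner ν t ↔
      (OuterCorner μ t ∧ t ≠ content cl - 1 ∧ t ≠ content cl + 1) ∨ t = content cl := by
  by_cases h1 : t = content cl
  · subst h1
    exact iff_of_true (outer_nu_c hcl hcells) (Or.inr rfl)
  by_cases h2 : t = content cl - 1
  · subst h2
    constructor
    · exact fun hO => absurd hO (not_outer_nu_cm1 hcl hcells)
    · rintro (⟨_, hne, _⟩ | he)
      · exact absurd rfl hne
      · omega
  by_cases h3 : t = content cl + 1
  · subst h3
    constructor
    · exact fun hO => absurd hO (not_outer_nu_cp1 hcl hcells)
    · rintro (⟨_, _, hne⟩ | he)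
      · exact absurd rfl hne
      · omega
  · constructor
    · intro hO; exact Or.inl ⟨outer_down hcl hcells h1 hO, h2, h3⟩
    · rintro (⟨hO, _, _⟩ | he)
      · exact outer_up hcl hcells h2 h3 hO
      · exact absurd he h1

end Assemble

/-! ### Finset algebra -/

lemma key_finset (A B A' B' : Finset ℤ) (c : ℤ) (f : ℤ → ℤ)
    (hA' : ∀ t, t ∈ A' ↔ (t ∈ A ∧ t ≠ c) ∨ (t = c - 1 ∧ (c - 1) ∉ B) ∨
      (t = c + 1 ∧ (c + 1) ∉ B))
    (hB' : ∀ t, t ∈ B' ↔ (t ∈ B ∧ t ≠ c - 1 ∧ t ≠ c + 1) ∨ t = c)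
    (hcA : c ∈ A) (hcB : c ∉ B) (hm1A : (c - 1) ∉ A) (hp1A : (c + 1) ∉ A) :
    (∑ t ∈ A', f t - ∑ t ∈ B', f t) - (∑ t ∈ A, f t - ∑ t ∈ B, f t)
      = f (c - 1) + f (c + 1) - 2 * f c := by
  by_cases h1 : (c - 1) ∈ B <;> by_cases h2 : (c + 1) ∈ B
  · have eA : A' = A.erase c := by
      ext t
      simp only [hA', Finset.mem_erase, h1, h2, not_true, and_false, or_false]
      tauto
    have eB : B' = insert c ((B.erase (c - 1)).erase (c + 1)) := by
      ext t
      simp only [hB', Finset.mem_insert, Finset.mem_erase]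
      tauto
    rw [eA, eB, Finset.sum_erase_eq_sub hcA,
      Finset.sum_insert (by simp [hcB]),
      Finset.sum_erase_eq_sub (Finset.mem_erase.mpr ⟨by omega, h2⟩),
      Finset.sum_erase_eq_sub h1]
    ring
  · have eA : A' = insert (c + 1) (A.erase c) := by
      ext t
      simp only [hA', Finset.mem_insert, Finset.mem_erase, h1, h2, not_true, and_false,
        or_false, not_false_iff, and_true]
      tauto
    have eB : B' = insert c (B.erase (c - 1)) := by
      ext t
      simp only [hB', Finset.mem_insert, Finset.mem_erase]
      constructor
      · rintro (⟨hB, hb1, hb2⟩ | rfl)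
        · exact Or.inr ⟨hb1, hB⟩
        · exact Or.inl rfl
      · rintro (rfl | ⟨hne, hB⟩)
        · exact Or.inr rfl
        · exact Or.inl ⟨hB, hne, fun he => h2 (he ▸ hB)⟩
    rw [eA, eB, Finset.sum_insert (fun hmem => hp1A (Finset.mem_of_mem_erase hmem)),
      Finset.sum_erase_eq_sub hcA,
      Finset.sum_insert (fun hmem => hcB (Finset.mem_of_mem_erase hmem)),
      Finset.sum_erase_eq_sub h1]
    ring
  · have eA : A' = insert (c - 1) (A.erase c) := by
      ext t
      simp only [hA', Finset.mem_insert, Finset.mem_erase, h1, h2, not_true, and_false,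
        or_false, not_false_iff, and_true]
      tauto
    have eB : B' = insert c (B.erase (c + 1)) := by
      ext t
      simp only [hB', Finset.mem_insert, Finset.mem_erase]
      constructor
      · rintro (⟨hB, hb1, hb2⟩ | rfl)
        · exact Or.inr ⟨hb2, hB⟩
        · exact Or.inl rfl
      · rintro (rfl | ⟨hne, hB⟩)
        · exact Or.inr rfl
        · exact Or.inl ⟨hB, fun he => h1 (he ▸ hB), hne⟩
    rw [eA, eB, Finset.sum_insert (fun hmem => hm1A (Finset.mem_of_mem_erase hmem)),
      Finset.sum_erase_eq_sub hcA,
      Finset.sum_insert (fun hmem => hcB (Finset.mem_of_mem_erase hmem)),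
      Finset.sum_erase_eq_sub h2]
    ring
  · have eA : A' = insert (c - 1) (insert (c + 1) (A.erase c)) := by
      ext t
      simp only [hA', Finset.mem_insert, Finset.mem_erase, h1, h2, not_false_iff, and_true]
      tauto
    have eB : B' = insert c B := by
      ext t
      simp only [hB', Finset.mem_insert]
      constructor
      · rintro (⟨hB, _, _⟩ | rfl)
        · exact Or.inr hB
        · exact Or.inl rfl
      · rintro (rfl | hB)
        · exact Or.inr rfl
        · exact Or.inl ⟨hB, fun he => h1 (he ▸ hB), fun he => h2 (he ▸ hB)⟩
    have hne3 : (c - 1) ∉ insert (c + 1) (A.erase c) := by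
      simp only [Finset.mem_insert, Finset.mem_erase]
      push_neg
      exact ⟨by omega, fun _ => hm1A⟩
    rw [eA, eB, Finset.sum_insert hne3,
      Finset.sum_insert (fun hmem => hp1A (Finset.mem_of_mem_erase hmem)),
      Finset.sum_erase_eq_sub hcA, Finset.sum_insert hcB]
    ring

/-! ### The binomial identity -/

lemma binom_id (c : ℤ) (k : ℕ) :
    (c - 1) ^ k + (c + 1) ^ k - 2 * c ^ k
      = ∑ j ∈ Icc 1 (k / 2), 2 * (k.choose (2 * j) : ℤ) * c ^ (k - 2 * j) := by
  have h3 : (c - 1) ^ k + (c + 1) ^ k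
      = ∑ j ∈ range (k + 1), (1 + (-1 : ℤ) ^ (k - j)) * (k.choose j : ℤ) * c ^ j := by
    rw [sub_eq_add_neg, add_pow, add_pow, ← Finset.sum_add_distrib]
    refine Finset.sum_congr rfl fun j hj => ?_
    simp only [one_pow]
    ring
  have h4 : (c - 1) ^ k + (c + 1) ^ k
      = ∑ j ∈ range (k + 1), (1 + (-1 : ℤ) ^ j) * (k.choose j : ℤ) * c ^ (k - j) := by
    rw [h3, ← Finset.sum_range_reflect]
    refine Finset.sum_congr rfl fun j hj => ?_
    rw [Finset.mem_range] at hj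
    have hj' : j ≤ k := by omega
    rw [show k + 1 - 1 - j = k - j from by omega, show k - (k - j) = j from by omega,
      Nat.choose_symm hj']
  have h5 : ∑ j ∈ range (k + 1), (1 + (-1 : ℤ) ^ j) * (k.choose j : ℤ) * c ^ (k - j)
      = ∑ i ∈ range (k / 2 + 1), 2 * (k.choose (2 * i) : ℤ) * c ^ (k - 2 * i) := by
    rw [← Finset.sum_filter_add_sum_filter_not (range (k + 1)) (fun j => Even j)]
    have hodd : ∑ j ∈ (range (k + 1)).filter (fun j => ¬ Even j),
        (1 + (-1 : ℤ) ^ j) * (k.choose j : ℤ) * c ^ (k - j) = 0 := by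
      refine Finset.sum_eq_zero fun j hj => ?_
      rw [Finset.mem_filter] at hj
      rw [Odd.neg_one_pow (Nat.not_even_iff_odd.mp hj.2)]
      ring
    rw [hodd, add_zero]
    have himg : (range (k + 1)).filter (fun j => Even j)
        = (range (k / 2 + 1)).image (fun i => 2 * i) := by
      ext n
      simp only [Finset.mem_filter, Finset.mem_range, Finset.mem_image]
      constructor
      · rintro ⟨hn, r, hr⟩
        exact ⟨n / 2, by omega, by omega⟩
      · rintro ⟨i, hi, rfl⟩
        exact ⟨by omega, i, by ring⟩
    rw [himg, Finset.sum_image (by intro a _ b _ hab; simp only at hab; omega)]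
    refine Finset.sum_congr rfl fun i hi => ?_
    rw [Even.neg_one_pow ⟨i, by ring⟩]
    ring
  have h6 : range (k / 2 + 1) = insert 0 (Icc 1 (k / 2)) := by
    ext n
    simp only [Finset.mem_range, Finset.mem_insert, Finset.mem_Icc]
    omega
  rw [h4, h5, h6, Finset.sum_insert (by simp)]
  simp only [Nat.mul_zero, Nat.choose_zero_right, Nat.cast_one, Nat.sub_zero]
  ring

/-! ### Sums over corner data -/

lemma qPow_eq {μ : YoungDiagram} {m : ℕ} {x y : ℕ → ℤ} (h : CornerData μ m x y) (k : ℕ) :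
    qPow m x y k = ∑ t ∈ (range (m + 1)).image x, t ^ k
      - ∑ t ∈ (range m).image (fun j => y (j + 1)), t ^ k := by
  unfold qPow
  have hx : ∑ t ∈ (range (m + 1)).image x, t ^ k = ∑ i ∈ range (m + 1), x i ^ k := by
    rw [Finset.sum_image]
    intro a ha b hb hab
    rw [Finset.mem_coe, Finset.mem_range] at ha hb
    by_contra hne
    rcases Nat.lt_or_ge a b with hl | hl
    · exact absurd hab (ne_of_lt (h.2.2.1 a b hl (by omega)))
    · have hl' : b < a := by omega
      exact absurd hab.symm (ne_of_lt (h.2.2.1 b a hl' (by omega)))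
  have hy : ∑ t ∈ (range m).image (fun j => y (j + 1)), t ^ k
      = ∑ j ∈ range m, y (j + 1) ^ k := by
    rw [Finset.sum_image]
    intro a ha b hb hab
    rw [Finset.mem_coe, Finset.mem_range] at ha hb
    by_contra hne
    rcases Nat.lt_or_ge a b with hl | hl
    · exact absurd hab (ne_of_lt (h.2.2.2 (a + 1) (b + 1) (by omega) (by omega) (by omega)))
    · have hl' : b < a := by omega
      exact absurd hab.symm
        (ne_of_lt (h.2.2.2 (b + 1) (a + 1) (by omega) (by omega) (by omega)))
  rw [hx, hy]

lemma mem_image_x_iff {μ : YoungDiagram} {m : ℕ} {x y : ℕ → ℤ} (h : CornerData μ m x y)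
    (t : ℤ) : t ∈ (range (m + 1)).image x ↔ InnerCorner μ t := by
  rw [h.1 t, Finset.mem_image]
  constructor
  · rintro ⟨i, hi, he⟩
    rw [Finset.mem_range] at hi
    exact ⟨i, by omega, he⟩
  · rintro ⟨i, hi, he⟩
    exact ⟨i, Finset.mem_range.mpr (by omega), he⟩

lemma mem_image_y_iff {μ : YoungDiagram} {m : ℕ} {x y : ℕ → ℤ} (h : CornerData μ m x y)
    (t : ℤ) : t ∈ (range m).image (fun j => y (j + 1)) ↔ OuterCorner μ t := by
  rw [h.2.1 t, Finset.mem_image]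
  constructor
  · rintro ⟨j, hj, he⟩
    rw [Finset.mem_range] at hj
    exact ⟨j + 1, by omega, by omega, he⟩
  · rintro ⟨j, h1, h2, he⟩
    refine ⟨j - 1, Finset.mem_range.mpr (by omega), ?_⟩
    rw [Nat.sub_add_cancel h1]
    exact he

end Stmt5Aux

theorem stmt5 (μ ν : YoungDiagram) (m m' : ℕ) (x y x' y' : ℕ → ℤ)
    (h : CornerData μ m x y) (h' : CornerData ν m' x' y')
    (i0 : ℕ) (hi0 : i0 ≤ m) (hadd : AddBoxAt μ ν (x i0)) (k : ℕ) :
    qPow m' x' y' k - qPow m x y k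
      = ∑ j ∈ Finset.Icc 1 (k / 2), 2 * (k.choose (2 * j) : ℤ) * x i0 ^ (k - 2 * j) := by
  obtain ⟨cl, hclmem, hcells, hclc⟩ := hadd
  rw [YoungDiagram.mem_cells] at hclmem
  have hAiff := Stmt5Aux.mem_image_x_iff h
  have hBiff := Stmt5Aux.mem_image_y_iff h
  have hA'iff := Stmt5Aux.mem_image_x_iff h'
  have hB'iff := Stmt5Aux.mem_image_y_iff h'
  have hInner := Stmt5Aux.inner_nu_iff hclmem hcells
  have hOuter := Stmt5Aux.outer_nu_iff hclmem hcells
  rw [hclc] at hInner hOuter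
  have hInner_c : InnerCorner μ (x i0) := (h.1 (x i0)).mpr ⟨i0, hi0, rfl⟩
  have hOc : ¬ OuterCorner μ (x i0) := hclc ▸ Stmt5Aux.not_outer_mu_c hclmem hcells
  have hIm1 : ¬ InnerCorner μ (x i0 - 1) := hclc ▸ Stmt5Aux.not_inner_mu_cm1 hclmem hcells
  have hIp1 : ¬ InnerCorner μ (x i0 + 1) := hclc ▸ Stmt5Aux.not_inner_mu_cp1 hclmem hcells
  have key : (∑ t ∈ (Finset.range (m' + 1)).image x', t ^ k
        - ∑ t ∈ (Finset.range m').image (fun j => y' (j + 1)), t ^ k)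
      - (∑ t ∈ (Finset.range (m + 1)).image x, t ^ k
        - ∑ t ∈ (Finset.range m).image (fun j => y (j + 1)), t ^ k)
      = (x i0 - 1) ^ k + (x i0 + 1) ^ k - 2 * x i0 ^ k := by
    refine Stmt5Aux.key_finset _ _ _ _ (x i0) (fun t => t ^ k) ?_ ?_ ?_ ?_ ?_ ?_
    · intro t
      rw [hA'iff t, hInner t, ← hAiff t, ← hBiff (x i0 - 1), ← hBiff (x i0 + 1)]
    · intro t
      rw [hB'iff t, hOuter t, ← hBiff t]
    · exact (hAiff _).mpr hInner_c
    · exact fun hmem => hOc ((hBiff _).mp hmem)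
    · exact fun hmem => hIm1 ((hAiff _).mp hmem)
    · exact fun hmem => hIp1 ((hAiff _).mp hmem)
  rw [Stmt5Aux.qPow_eq h' k, Stmt5Aux.qPow_eq h k, key]
  exact Stmt5Aux.binom_id (x i0) k
end

section
/- For every partition λ with inner corner contents x_0,…,x_m and outer corner contents y_1,…,y_m, writing λ^{i+} for λ with a box added at the inner corner of content x_i and H_ν for the product of all hook lengths of a partition ν, one has Σ_{i=0}^{m} (H_λ/H_{λ^{i+}})·x_i = 0 and Σ_{i=0}^{m} (H_λ/H_{λ^{i+}})·x_i² = |λ|. -/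
open Finset

open PaperDefs

namespace Stmt6Aux


/-- vertical position of row r -/
def vp (μ : YoungDiagram) (r : ℕ) : ℤ := (μ.rowLen r : ℤ) - r - 1
/-- horizontal position of column j -/
def hp (μ : YoungDiagram) (j : ℕ) : ℤ := (j : ℤ) - μ.colLen j
/-- p is a vertical position -/
def IsV (μ : YoungDiagram) (p : ℤ) : Prop := ∃ r, vp μ r = p

variable {μ : YoungDiagram}

lemma vp_lt_vp {r s : ℕ} (h : r < s) : vp μ s < vp μ r := by
  have := μ.rowLen_anti r s h.le
  simp only [vp]; omega

lemma vp_inj {r s : ℕ} (h : vp μ r = vp μ s) : r = s := by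
  rcases lt_trichotomy r s with h'|h'|h'
  · exact absurd h (vp_lt_vp h').ne'
  · exact h'
  · exact absurd h (vp_lt_vp h').ne

lemma hp_strictMono : StrictMono (hp μ) := by
  apply strictMono_nat_of_lt_succ
  intro j
  have := μ.colLen_anti j (j+1) (by omega)
  simp only [hp]; push_cast; omega

lemma hp_lt_hp {r s : ℕ} (h : r < s) : hp μ r < hp μ s := hp_strictMono h

lemma vp_ne_hp (r j : ℕ) : vp μ r ≠ hp μ j := by
  by_cases h : (r, j) ∈ μ
  · rw [YoungDiagram.mem_iff_lt_rowLen] at h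
    have h2 : r < μ.colLen j := YoungDiagram.mem_iff_lt_colLen.mp (by rwa [YoungDiagram.mem_iff_lt_rowLen])
    simp only [vp, hp]; omega
  · rw [YoungDiagram.mem_iff_lt_rowLen] at h
    have h2 : ¬ r < μ.colLen j := fun hc => h (YoungDiagram.mem_iff_lt_rowLen.mp (YoungDiagram.mem_iff_lt_colLen.mpr hc))
    simp only [vp, hp]; omega

lemma exists_vp_lt (p : ℤ) : ∃ a : ℕ, vp μ a < p := by
  refine ⟨μ.rowLen 0 + (-p).toNat + 1, ?_⟩
  have := μ.rowLen_anti 0 (μ.rowLen 0 + (-p).toNat + 1) (by omega)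
  simp only [vp]
  omega

lemma cover {p : ℤ} (h : ¬ IsV μ p) : ∃ j : ℕ, hp μ j = p := by
  classical
  have hex := exists_vp_lt (μ := μ) p
  set a := Nat.find hex with ha
  have h1 : vp μ a < p := Nat.find_spec hex
  have h2 : ∀ b < a, p < vp μ b := by
    intro b hb
    have := Nat.find_min hex hb
    rcases lt_or_eq_of_le (not_lt.mp this) with h'|h'
    · exact h'
    · exact absurd ⟨b, h'.symm⟩ h
  have hpa : 0 ≤ p + a := by
    have : (0:ℤ) ≤ μ.rowLen a := by positivity
    simp only [vp] at h1; omega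
  refine ⟨(p + a).toNat, ?_⟩
  have hj : ((p + a).toNat : ℤ) = p + a := Int.toNat_of_nonneg hpa
  have hcol : μ.colLen ((p+a).toNat) = a := by
    have hub : ¬ a < μ.colLen ((p+a).toNat) := by
      intro hc
      have := YoungDiagram.mem_iff_lt_rowLen.mp (YoungDiagram.mem_iff_lt_colLen.mpr hc)
      simp only [vp] at h1; omega
    have hlb : ∀ b < a, b < μ.colLen ((p+a).toNat) := by
      intro b hb
      apply YoungDiagram.mem_iff_lt_colLen.mp
      apply YoungDiagram.mem_iff_lt_rowLen.mpr
      have h3 := h2 b hb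
      have h4 := μ.rowLen_anti b (a-1) (by omega)
      have h5 := h2 (a-1) (by omega)
      simp only [vp] at h3 h5 ⊢
      omega
    by_cases h0 : a = 0
    · omega
    · have := hlb (a-1) (by omega); omega
  simp only [hp, hcol]; omega



open YoungDiagram
variable {μ : YoungDiagram}

lemma addBoxAt_elim {ν : YoungDiagram} {k : ℤ} (h : AddBoxAt μ ν k) :
    ∃ a b : ℕ, b = μ.rowLen a ∧ a = μ.colLen b ∧ (b:ℤ) - a = k ∧
      ν.cells = insert (a,b) μ.cells := by
  obtain ⟨⟨a,b⟩, hnot, hcells, hcont⟩ := h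
  refine ⟨a, b, ?_, ?_, by simpa [content] using hcont, hcells⟩
  · -- b = rowLen a
    have hb1 : ¬ b < μ.rowLen a := fun hc => hnot ((μ.mem_cells _).mpr (mem_iff_lt_rowLen.mpr hc))
    have hb2 : ∀ j < b, j < μ.rowLen a := by
      intro j hj
      have hmem : (a, j) ∈ ν.cells := by
        apply (ν.mem_cells _).mpr
        apply ν.up_left_mem le_rfl hj.le
        rw [← ν.mem_cells, hcells]; exact Finset.mem_insert_self _ _
      rw [hcells, Finset.mem_insert] at hmem
      rcases hmem with h'|h'
      · exact absurd h' (by simp [Prod.ext_iff]; omega)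
      · exact mem_iff_lt_rowLen.mp ((μ.mem_cells _).mp h')
    rcases Nat.lt_or_ge (μ.rowLen a) b with h'|h'
    · exact absurd (hb2 _ h') (lt_irrefl _)
    · omega
  · -- a = colLen b
    have hb1 : ¬ a < μ.colLen b := fun hc => hnot ((μ.mem_cells _).mpr (mem_iff_lt_colLen.mpr hc))
    have hb2 : ∀ i < a, i < μ.colLen b := by
      intro i hi
      have hmem : (i, b) ∈ ν.cells := by
        apply (ν.mem_cells _).mpr
        apply ν.up_left_mem hi.le le_rfl
        rw [← ν.mem_cells, hcells]; exact Finset.mem_insert_self _ _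
      rw [hcells, Finset.mem_insert] at hmem
      rcases hmem with h'|h'
      · exact absurd h' (by simp [Prod.ext_iff]; omega)
      · exact mem_iff_lt_colLen.mp ((μ.mem_cells _).mp h')
    rcases Nat.lt_or_ge (μ.colLen b) a with h'|h'
    · exact absurd (hb2 _ h') (lt_irrefl _)
    · omega

lemma isV_of_lt {p : ℤ} (h : p < -(μ.colLen 0 : ℤ)) : IsV μ p := by
  refine ⟨(-p-1).toNat, ?_⟩
  have h0 : ((-p-1).toNat : ℤ) = -p-1 := Int.toNat_of_nonneg (by omega)
  have : μ.rowLen ((-p-1).toNat) = 0 := by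
    by_contra hr
    have : ((-p-1).toNat, 0) ∈ μ := mem_iff_lt_rowLen.mpr (by omega)
    have := mem_iff_lt_colLen.mp this
    omega
  simp only [vp, this]; omega

lemma not_isV_neg_colLen : ¬ IsV μ (-(μ.colLen 0 : ℤ)) := by
  rintro ⟨r, hr⟩
  by_cases h : r < μ.colLen 0
  · have : (r, 0) ∈ μ := mem_iff_lt_colLen.mpr h
    have := mem_iff_lt_rowLen.mp this
    simp only [vp] at hr; omega
  · have : μ.rowLen r = 0 := by
      by_contra hr2
      have : (r, 0) ∈ μ := mem_iff_lt_rowLen.mpr (by omega)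
      have := mem_iff_lt_colLen.mp this
      omega
    simp only [vp, this] at hr; omega

/-- characterization of inner corners -/
lemma inner_iff {k : ℤ} : InnerCorner μ k ↔ (IsV μ (k-1) ∧ ¬ IsV μ k) := by
  constructor
  · rintro ⟨ν, hν⟩
    obtain ⟨a, b, hb, ha, hk, hcells⟩ := addBoxAt_elim hν
    constructor
    · exact ⟨a, by simp only [vp]; omega⟩
    · rintro ⟨s, hs⟩
      -- vp s = k = b - a, with vp a = k - 1 < k so s < a
      have hsa : s < a := by
        by_contra hc
        have := μ.rowLen_anti a s (not_lt.mp hc)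
        simp only [vp] at hs; omega
      have : (s, b) ∈ μ := mem_iff_lt_colLen.mpr (by omega)
      have := mem_iff_lt_rowLen.mp this
      simp only [vp] at hs; omega
  · rintro ⟨⟨a, hva⟩, hnk⟩
    -- add box at (a, rowLen a)
    set b := μ.rowLen a with hb
    have hrows : ∀ i < a, b < μ.rowLen i := by
      intro i hi
      have h1 : μ.rowLen (a-1) ≠ b := by
        intro hc
        exact hnk ⟨a-1, by simp only [vp, hc]; simp only [vp] at hva; omega⟩
      have h2 := μ.rowLen_anti (a-1) a (by omega)
      have h3 := μ.rowLen_anti i (a-1) (by omega)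
      omega
    have hlower : IsLowerSet (↑(insert (a,b) μ.cells) : Set (ℕ × ℕ)) := by
      rintro ⟨i2,j2⟩ ⟨i1,j1⟩ hle hmem
      simp only [Finset.coe_insert, Set.mem_insert_iff, Finset.mem_coe, μ.mem_cells] at hmem ⊢
      rw [Prod.mk_le_mk] at hle
      rcases hmem with h'|h'
      · -- (i2,j2) = (a,b)
        have hi : i1 ≤ a := by rw [Prod.ext_iff] at h'; simp at h'; omega
        have hj : j1 ≤ b := by rw [Prod.ext_iff] at h'; simp at h'; omega
        by_cases hia : i1 = a
        · by_cases hjb : j1 = b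
          · left; simp [hia, hjb]
          · right; subst hia; exact mem_iff_lt_rowLen.mpr (by omega)
        · right
          exact mem_iff_lt_rowLen.mpr (lt_of_le_of_lt hj (hrows i1 (by omega)))
      · right; exact μ.up_left_mem hle.1 hle.2 h'
    refine ⟨⟨insert (a,b) μ.cells, hlower⟩, (a,b), ?_, rfl, ?_⟩
    · rw [μ.mem_cells, mem_iff_lt_rowLen]; omega
    · simp only [content]; simp only [vp] at hva; omega

/-- characterization of outer corners -/
lemma outer_iff {k : ℤ} : OuterCorner μ k ↔ (¬ IsV μ (k-1) ∧ IsV μ k) := by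
  constructor
  · rintro ⟨ν, hν⟩
    obtain ⟨a, b, hb, ha, hk, hcells⟩ := addBoxAt_elim hν
    -- μ = ν + box (a,b); rowLen μ a = b + 1, rowLen μ s = rowLen ν s for s ≠ a
    have hrowa : μ.rowLen a = b + 1 := by
      have h1 : (a, b) ∈ μ := by rw [← μ.mem_cells, hcells]; exact Finset.mem_insert_self _ _
      have h2 : ¬ (a, b+1) ∈ μ := by
        rw [← μ.mem_cells, hcells, Finset.mem_insert]
        rintro (h'|h')
        · simp [Prod.ext_iff] at h'
        · have := mem_iff_lt_rowLen.mp ((ν.mem_cells _).mp h'); omega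
      have h1 := mem_iff_lt_rowLen.mp h1
      rw [mem_iff_lt_rowLen] at h2
      omega
    have hrowo : ∀ s : ℕ, s ≠ a → μ.rowLen s = ν.rowLen s := by
      intro s hs
      have hmm : ∀ j : ℕ, ((s,j) ∈ μ ↔ (s,j) ∈ ν) := by
        intro j
        rw [← μ.mem_cells, ← ν.mem_cells, hcells, Finset.mem_insert]
        constructor
        · rintro (h'|h')
          · exact absurd h' (by simp [Prod.ext_iff, hs])
          · exact h'
        · intro h'; right; exact h'
      rcases Nat.lt_trichotomy (μ.rowLen s) (ν.rowLen s) with h'|h'|h'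
      · have := mem_iff_lt_rowLen.mp ((hmm (μ.rowLen s)).mpr (mem_iff_lt_rowLen.mpr h')); omega
      · exact h'
      · have := mem_iff_lt_rowLen.mp ((hmm (ν.rowLen s)).mp (mem_iff_lt_rowLen.mpr h')); omega
    constructor
    · rintro ⟨s, hs⟩
      have hsa : s ≠ a := by
        intro h'
        rw [h'] at hs
        simp only [vp, hrowa] at hs; omega
      -- vp ν s = k - 1 and vp ν a = k - 1 : contradiction with injectivity
      have h1 : vp ν s = k - 1 := by
        simp only [vp, hrowo s hsa] at hs ⊢
        · exact hs
      have h2 : vp ν a = k - 1 := by simp only [vp, hb]; omega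
      have := vp_inj (h1.trans h2.symm)
      exact hsa this
    · exact ⟨a, by simp only [vp, hrowa]; omega⟩
  · rintro ⟨hnk, ⟨a, hva⟩⟩
    set b := μ.rowLen a with hbdef
    have hbpos : 0 < b := by
      by_contra hc
      apply hnk
      refine ⟨a+1, ?_⟩
      have h2 := μ.rowLen_anti a (a+1) (by omega)
      simp only [vp] at hva ⊢; omega
    have hnext : μ.rowLen (a+1) < b := by
      rcases lt_or_eq_of_le (μ.rowLen_anti a (a+1) (by omega)) with h'|h'
      · exact h'
      · exfalso; apply hnk; exact ⟨a+1, by simp only [vp, h']; simp only [vp] at hva; omega⟩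
    have hmem : (a, b-1) ∈ μ := mem_iff_lt_rowLen.mpr (by omega)
    have hlower : IsLowerSet (↑(μ.cells.erase (a, b-1)) : Set (ℕ × ℕ)) := by
      rintro ⟨i2,j2⟩ ⟨i1,j1⟩ hle hmem2
      simp only [Finset.coe_erase, Set.mem_diff, Finset.mem_coe, μ.mem_cells,
        Set.mem_singleton_iff] at hmem2 ⊢
      rw [Prod.mk_le_mk] at hle
      obtain ⟨hin, hne⟩ := hmem2
      constructor
      · exact μ.up_left_mem hle.1 hle.2 hin
      · intro h'
        rw [Prod.ext_iff] at h'; simp only at h'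
        obtain ⟨h1', h2'⟩ := h'
        -- (i1,j1) = (a, b-1), (i2, j2) ≥ (i1,j1), in μ, ≠ (a, b-1)
        apply hne
        have hj2 : j2 < μ.rowLen i2 := mem_iff_lt_rowLen.mp hin
        rw [Prod.ext_iff]
        by_cases hia : i2 = a
        · rw [hia]; simp only [and_true, true_and]
          rw [hia] at hj2; omega
        · exfalso
          have := μ.rowLen_anti (a+1) i2 (by omega)
          omega
    refine ⟨⟨μ.cells.erase (a, b-1), hlower⟩, (a, b-1), ?_, ?_, ?_⟩
    · simp
    · rw [Finset.insert_erase (by rwa [μ.mem_cells])]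
    · simp only [content]; simp only [vp] at hva; push_cast; omega



open YoungDiagram Finset
variable {μ : YoungDiagram}

/-- number of rows -/
def dd (μ : YoungDiagram) : ℕ := μ.colLen 0
def Lb (μ : YoungDiagram) : ℤ := -(dd μ : ℤ)
def VF (μ : YoungDiagram) : Finset ℤ := (range (dd μ)).image (vp μ)
def WF (μ : YoungDiagram) : Finset ℤ := (VF μ).image (· + 1)
def AF (μ : YoungDiagram) : Finset ℤ := insert (Lb μ) (WF μ \ VF μ)
def BF (μ : YoungDiagram) : Finset ℤ := VF μ \ WF μ

lemma rowLen_pos_iff {r : ℕ} : 0 < μ.rowLen r ↔ r < dd μ := by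
  rw [← mem_iff_lt_rowLen (j := 0), mem_iff_lt_colLen]; rfl

lemma mem_VF {p : ℤ} : p ∈ VF μ ↔ (IsV μ p ∧ Lb μ ≤ p) := by
  constructor
  · intro hp
    obtain ⟨r, hr, rfl⟩ := mem_image.mp hp
    rw [mem_range] at hr
    have h1 := rowLen_pos_iff.mpr hr
    refine ⟨⟨r, rfl⟩, ?_⟩
    simp only [vp, Lb]; omega
  · rintro ⟨⟨r, rfl⟩, hL⟩
    apply mem_image.mpr ⟨r, ?_, rfl⟩
    rw [mem_range]
    by_contra hc
    have h0 : μ.rowLen r = 0 := by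
      have := rowLen_pos_iff (μ := μ) (r := r)
      omega
    simp only [vp, h0, Lb] at hL; omega

lemma card_VF : (VF μ).card = dd μ := by
  rw [VF, Finset.card_image_of_injOn, card_range]
  intro r _ s _ h
  exact vp_inj h

lemma not_isV_Lb : ¬ IsV μ (Lb μ) := by
  simpa [Lb, dd] using (not_isV_neg_colLen (μ := μ))

lemma isV_of_lt_Lb {p : ℤ} (h : p < Lb μ) : IsV μ p :=
  isV_of_lt (by simpa [Lb, dd] using h)

lemma Lb_not_mem_VF : Lb μ ∉ VF μ := by
  intro hc
  exact not_isV_Lb (mem_VF.mp hc).1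

lemma mem_WF {p : ℤ} : p ∈ WF μ ↔ p - 1 ∈ VF μ := by
  constructor
  · intro hp; obtain ⟨v, hv, rfl⟩ := mem_image.mp hp; simpa using hv
  · intro hp; exact mem_image.mpr ⟨p - 1, hp, by ring⟩

lemma Lb_not_mem_WF : Lb μ ∉ WF μ := by
  intro hc
  have := (mem_VF.mp (mem_WF.mp hc)).2
  omega

lemma mem_AF {k : ℤ} : k ∈ AF μ ↔ (IsV μ (k-1) ∧ ¬ IsV μ k) := by
  rw [AF, mem_insert, mem_sdiff, mem_WF]
  constructor
  · rintro (rfl | ⟨h1, h2⟩)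
    · exact ⟨isV_of_lt_Lb (by omega), not_isV_Lb⟩
    · have hk1 := (mem_VF.mp h1).2
      refine ⟨(mem_VF.mp h1).1, fun hc => h2 (mem_VF.mpr ⟨hc, by omega⟩)⟩
  · rintro ⟨h1, h2⟩
    rcases lt_trichotomy k (Lb μ) with hlt|heq|hgt
    · exact absurd (isV_of_lt_Lb hlt) h2
    · exact Or.inl heq
    · right
      refine ⟨mem_VF.mpr ⟨h1, by omega⟩, fun hc => h2 (mem_VF.mp hc).1⟩

lemma mem_BF {k : ℤ} : k ∈ BF μ ↔ (¬ IsV μ (k-1) ∧ IsV μ k) := by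
  rw [BF, mem_sdiff, mem_WF]
  constructor
  · rintro ⟨h1, h2⟩
    have hk := (mem_VF.mp h1).2
    have hkL : k ≠ Lb μ := fun hc => Lb_not_mem_VF (hc ▸ h1)
    exact ⟨fun hc => h2 (mem_VF.mpr ⟨hc, by omega⟩), (mem_VF.mp h1).1⟩
  · rintro ⟨h1, h2⟩
    have hk1 : Lb μ ≤ k - 1 := by
      by_contra hc
      exact h1 (isV_of_lt_Lb (by omega))
    exact ⟨mem_VF.mpr ⟨h2, by omega⟩, fun hc => h1 (mem_VF.mp hc).1⟩

/-- main summation identity over corners -/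
lemma sum_AF_sub_BF (f : ℤ → ℚ) :
    (∑ k ∈ AF μ, f k) - (∑ k ∈ BF μ, f k)
      = f (Lb μ) + ∑ v ∈ VF μ, (f (v+1) - f v) := by
  have hL : Lb μ ∉ WF μ \ VF μ := fun hc => Lb_not_mem_WF (mem_sdiff.mp hc).1
  rw [AF, Finset.sum_insert hL]
  have h1 : ∑ k ∈ WF μ \ VF μ, f k + ∑ k ∈ WF μ ∩ VF μ, f k = ∑ k ∈ WF μ, f k := by
    rw [← Finset.sdiff_inter_self_left (s := WF μ) (t := VF μ)]
    exact Finset.sum_sdiff (Finset.inter_subset_left)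
  have h2 : ∑ k ∈ BF μ, f k + ∑ k ∈ VF μ ∩ WF μ, f k = ∑ k ∈ VF μ, f k := by
    rw [BF, ← Finset.sdiff_inter_self_left (s := VF μ) (t := WF μ)]
    exact Finset.sum_sdiff (Finset.inter_subset_left)
  have h3 : ∑ k ∈ WF μ, f k = ∑ v ∈ VF μ, f (v + 1) := by
    rw [WF, Finset.sum_image (by intro a _ b _ h; simpa using h)]
  have h4 : ∑ k ∈ WF μ ∩ VF μ, f k = ∑ k ∈ VF μ ∩ WF μ, f k := by
    rw [Finset.inter_comm]
  rw [Finset.sum_sub_distrib]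
  linarith [h1, h2, h3, h4]

lemma card_sum_rowLen : μ.card = ∑ r ∈ range (dd μ), μ.rowLen r := by
  rw [YoungDiagram.card]
  rw [Finset.card_eq_sum_card_fiberwise (f := Prod.fst) (t := range (dd μ)) ?_]
  · apply Finset.sum_congr rfl
    intro r _
    rw [μ.rowLen_eq_card]
    congr 1
  · intro c hc
    rw [Finset.mem_coe, mem_range, ← rowLen_pos_iff]
    rw [Finset.mem_coe, μ.mem_cells] at hc
    have hm : (c.1, c.2) ∈ μ := by simpa using hc
    have := mem_iff_lt_rowLen.mp (μ.up_left_mem le_rfl (Nat.zero_le _) hm)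
    omega

lemma q1_eq : (∑ k ∈ AF μ, (k:ℚ)) - (∑ k ∈ BF μ, (k:ℚ)) = 0 := by
  rw [sum_AF_sub_BF (fun k => (k:ℚ))]
  have h1 : ∀ v ∈ VF μ, (((v+1 : ℤ)):ℚ) - (v:ℚ) = 1 := by intros; push_cast; ring
  rw [Finset.sum_congr rfl h1, Finset.sum_const, card_VF]
  simp only [Lb]
  push_cast
  ring

lemma q2_eq : (∑ k ∈ AF μ, (k:ℚ)^2) - (∑ k ∈ BF μ, (k:ℚ)^2) = 2 * μ.card := by
  rw [sum_AF_sub_BF (fun k => (k:ℚ)^2)]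
  have h1 : ∀ v ∈ VF μ, (((v+1:ℤ)):ℚ)^2 - (v:ℚ)^2 = 2*(v:ℚ) + 1 := by intros; push_cast; ring
  rw [Finset.sum_congr rfl h1]
  have h2 : ∑ v ∈ VF μ, (2*(v:ℚ) + 1) = ∑ r ∈ range (dd μ), (2*(vp μ r : ℚ) + 1) := by
    rw [VF, Finset.sum_image (by intro a _ b _ h; exact vp_inj h)]
  rw [h2]
  have h3 : ∀ r ∈ range (dd μ), (2*(vp μ r : ℚ) + 1) = 2*(μ.rowLen r : ℚ) - 2*(r:ℚ) - 1 := by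
    intro r _; simp only [vp]; push_cast; ring
  rw [Finset.sum_congr rfl h3]
  have h4 : (∑ r ∈ range (dd μ), ((μ.rowLen r : ℚ))) = (μ.card : ℚ) := by
    rw [card_sum_rowLen]; push_cast; rfl
  have h5 : (∑ r ∈ range (dd μ), (r:ℚ)) * 2 = (dd μ) * ((dd μ) - 1) := by
    have hs : (∑ r ∈ range (dd μ), (r:ℚ)) = ((∑ i ∈ range (dd μ), i : ℕ) : ℚ) := by
      push_cast; rfl
    rcases Nat.eq_zero_or_pos (dd μ) with hz|hz
    · simp [hz]
    · obtain ⟨e, he⟩ : ∃ e, dd μ = e + 1 := ⟨dd μ - 1, by omega⟩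
      have hg := Finset.sum_range_id_mul_two (e + 1)
      simp only [Nat.add_sub_cancel] at hg
      have hq : ((∑ i ∈ range (e+1), i : ℕ) : ℚ) * 2 = ((e:ℚ)+1) * e := by
        exact_mod_cast congrArg (Nat.cast : ℕ → ℚ) hg
      rw [he] at hs ⊢
      rw [hs]
      push_cast
      linarith
  have h6 : ∑ r ∈ range (dd μ), (2*(μ.rowLen r : ℚ) - 2*(r:ℚ) - 1)
      = 2 * (μ.card : ℚ) - 2 * (∑ r ∈ range (dd μ), (r:ℚ)) - (dd μ) := by
    rw [Finset.sum_sub_distrib, Finset.sum_sub_distrib, ← Finset.mul_sum, ← Finset.mul_sum, h4]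
    simp
  rw [h6]
  simp only [Lb]
  push_cast
  nlinarith [h5]



open YoungDiagram Finset

variable {μ ν : YoungDiagram} {a b : ℕ}

lemma rowLen_insert_self (hcells : ν.cells = insert (a,b) μ.cells) (hnot : (a,b) ∉ μ) :
    ν.rowLen a = b + 1 := by
  have h1 : (a, b) ∈ ν := by rw [← ν.mem_cells, hcells]; exact mem_insert_self _ _
  have h2 : (a, b+1) ∉ ν := by
    rw [← ν.mem_cells, hcells, mem_insert]
    rintro (h'|h')
    · simp [Prod.ext_iff] at h'
    · exact hnot (μ.up_left_mem le_rfl (by omega) ((μ.mem_cells _).mp h'))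
  rw [mem_iff_lt_rowLen] at h1 h2
  omega

lemma rowLen_insert_other (hcells : ν.cells = insert (a,b) μ.cells) {s : ℕ} (hs : s ≠ a) :
    ν.rowLen s = μ.rowLen s := by
  have hmm : ∀ j : ℕ, ((s,j) ∈ ν ↔ (s,j) ∈ μ) := by
    intro j
    rw [← μ.mem_cells, ← ν.mem_cells, hcells, mem_insert]
    constructor
    · rintro (h'|h')
      · exact absurd h' (by simp [Prod.ext_iff, hs])
      · exact h'
    · intro h'; right; exact h'
  rcases Nat.lt_trichotomy (μ.rowLen s) (ν.rowLen s) with h'|h'|h'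
  · have := mem_iff_lt_rowLen.mp ((hmm (μ.rowLen s)).mp (mem_iff_lt_rowLen.mpr h')); omega
  · exact h'.symm
  · have := mem_iff_lt_rowLen.mp ((hmm (ν.rowLen s)).mpr (mem_iff_lt_rowLen.mpr h')); omega

lemma colLen_insert_self (hcells : ν.cells = insert (a,b) μ.cells) (hnot : (a,b) ∉ μ) :
    ν.colLen b = a + 1 := by
  have h1 : (a, b) ∈ ν := by rw [← ν.mem_cells, hcells]; exact mem_insert_self _ _
  have h2 : (a+1, b) ∉ ν := by
    rw [← ν.mem_cells, hcells, mem_insert]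
    rintro (h'|h')
    · simp [Prod.ext_iff] at h'
    · exact hnot (μ.up_left_mem (by omega) le_rfl ((μ.mem_cells _).mp h'))
  rw [mem_iff_lt_colLen] at h1 h2
  omega

lemma colLen_insert_other (hcells : ν.cells = insert (a,b) μ.cells) {j : ℕ} (hj : j ≠ b) :
    ν.colLen j = μ.colLen j := by
  have hmm : ∀ i : ℕ, ((i,j) ∈ ν ↔ (i,j) ∈ μ) := by
    intro i
    rw [← μ.mem_cells, ← ν.mem_cells, hcells, mem_insert]
    constructor
    · rintro (h'|h')
      · exact absurd h' (by simp [Prod.ext_iff, hj])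
      · exact h'
    · intro h'; right; exact h'
  rcases Nat.lt_trichotomy (μ.colLen j) (ν.colLen j) with h'|h'|h'
  · have := mem_iff_lt_colLen.mp ((hmm (μ.colLen j)).mp (mem_iff_lt_colLen.mpr h')); omega
  · exact h'.symm
  · have := mem_iff_lt_colLen.mp ((hmm (ν.colLen j)).mpr (mem_iff_lt_colLen.mpr h')); omega

lemma hookLen_pos {i j : ℕ} (h : (i,j) ∈ μ) : 0 < hookLen μ i j := by
  have h1 := mem_iff_lt_rowLen.mp h
  have h2 := mem_iff_lt_colLen.mp h
  simp only [hookLen]; omega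

lemma Hprod_pos : 0 < Hprod μ := by
  rw [Hprod]
  apply Finset.prod_pos
  intro c hc
  have := hookLen_pos ((μ.mem_cells c).mp hc)
  exact_mod_cast Nat.cast_pos.mpr this

/-- hook lengths after inserting the box -/
lemma hookLen_insert (hcells : ν.cells = insert (a,b) μ.cells) (hnot : (a,b) ∉ μ)
    (hb : b = μ.rowLen a) (ha : a = μ.colLen b)
    {i j : ℕ} (hij : (i,j) ∈ μ) :
    hookLen ν i j = hookLen μ i j + (if i = a ∨ j = b then 1 else 0) := by
  have hr := mem_iff_lt_rowLen.mp hij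
  have hc := mem_iff_lt_colLen.mp hij
  by_cases hia : i = a
  · subst hia
    -- j < rowLen i ≤ b
    have hjb : j ≠ b := by
      intro h'; exact hnot (h' ▸ hij)
    have hrb : μ.rowLen i ≤ b := by
      by_contra h'
      exact hnot (mem_iff_lt_rowLen.mpr (by omega))
    rw [hookLen, hookLen, rowLen_insert_self hcells hnot, colLen_insert_other hcells hjb,
      if_pos (Or.inl rfl)]
    omega
  · by_cases hjb : j = b
    · subst hjb
      have hca : μ.colLen j ≤ a := by
        by_contra h'
        exact hnot (mem_iff_lt_colLen.mpr (by omega))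
      rw [hookLen, hookLen, rowLen_insert_other hcells hia, colLen_insert_self hcells hnot,
        if_pos (Or.inr rfl)]
      omega
    · rw [hookLen, hookLen, rowLen_insert_other hcells hia, colLen_insert_other hcells hjb,
        if_neg (by tauto)]
      omega

lemma hookLen_insert_new (hcells : ν.cells = insert (a,b) μ.cells) (hnot : (a,b) ∉ μ) :
    hookLen ν a b = 1 := by
  rw [hookLen, rowLen_insert_self hcells hnot, colLen_insert_self hcells hnot]
  omega



open YoungDiagram Finset

lemma prod_ratio (f : ℕ → ℚ) (n : ℕ) (hf : ∀ t ≤ n, f t ≠ 0) :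
    ∏ t ∈ range n, (f (t+1) / f t) = f n / f 0 := by
  induction n with
  | zero => simp [div_self (hf 0 le_rfl)]
  | succ n ih =>
    rw [Finset.prod_range_succ, ih (fun t ht => hf t (by omega))]
    have h0 : f n ≠ 0 := hf n (by omega)
    have h1 : f 0 ≠ 0 := hf 0 (by omega)
    field_simp

lemma telescope_Icc (L k : ℤ) (h : L ≤ k - 1) :
    ∏ p ∈ Finset.Icc L (k-2), (((k:ℚ) - p - 1) / ((k:ℚ) - p)) = 1 / ((k:ℚ) - L) := by
  set n : ℕ := (k - 1 - L).toNat with hn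
  have hn' : (n : ℤ) = k - 1 - L := Int.toNat_of_nonneg (by omega)
  have hnq : ((n:ℚ)) = (k:ℚ) - 1 - (L:ℚ) := by exact_mod_cast congrArg (Int.cast : ℤ → ℚ) hn'
  have himg : Finset.Icc L (k-2) = (range n).image (fun t : ℕ => L + t) := by
    ext p
    simp only [Finset.mem_Icc, Finset.mem_image, mem_range]
    constructor
    · intro hp
      refine ⟨(p - L).toNat, by omega, by omega⟩
    · rintro ⟨t, ht, rfl⟩; omega
  have hnz : ∀ t, t ≤ n → ((fun t : ℕ => (k:ℚ) - L - t) t) ≠ 0 := by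
    intro t ht
    simp only
    have h1 : (t:ℚ) ≤ (n:ℚ) := by exact_mod_cast ht
    intro hc
    have h2 : (k:ℚ) - L = t := by linarith
    nlinarith [h1, hnq, h2]
  have key := prod_ratio (fun t : ℕ => (k:ℚ) - L - t) n hnz
  rw [himg, Finset.prod_image (by intro s _ t _ h2; simpa using h2)]
  push_cast
  push_cast at key
  have hfact : ∀ t ∈ range n, ((k:ℚ) - ((L:ℚ) + (t:ℚ)) - 1)/((k:ℚ) - ((L:ℚ) + (t:ℚ)))
      = ((k:ℚ) - (L:ℚ) - ((t:ℚ) + 1))/((k:ℚ) - (L:ℚ) - (t:ℚ)) := by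
    intro t _; ring_nf
  rw [Finset.prod_congr rfl hfact, key]
  rw [hnq]
  ring_nf

variable {μ ν : YoungDiagram} {a b : ℕ} {k : ℤ}

/-- cast of row hooks -/
lemma row_hook_cast (hb : b = μ.rowLen a) (hk : (b:ℤ) - a = k)
    {j : ℕ} (hj : j < b) : (hookLen μ a j : ℤ) = k - hp μ j - 1 := by
  have hmem : (a, j) ∈ μ := mem_iff_lt_rowLen.mpr (by omega)
  have hc := mem_iff_lt_colLen.mp hmem
  simp only [hookLen, hp]
  omega

/-- cast of column hooks -/
lemma col_hook_cast (ha : a = μ.colLen b) (hk : (b:ℤ) - a = k)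
    {i : ℕ} (hi : i < a) : (hookLen μ i b : ℤ) = vp μ i - k := by
  have hmem : (i, b) ∈ μ := mem_iff_lt_colLen.mpr (by omega)
  have hr := mem_iff_lt_rowLen.mp hmem
  simp only [hookLen, vp]
  omega

lemma row_image (hb : b = μ.rowLen a) (ha : a = μ.colLen b) (hk : (b:ℤ) - a = k) :
    (range b).image (hp μ) = Finset.Icc (Lb μ) (k-2) \ VF μ := by
  have hvk1 : IsV μ (k-1) := ⟨a, by simp only [vp]; omega⟩
  have hpb : hp μ b = k := by simp only [hp]; omega
  ext p
  simp only [Finset.mem_image, mem_range, Finset.mem_sdiff, Finset.mem_Icc]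
  constructor
  · rintro ⟨j, hj, rfl⟩
    have h1 : Lb μ ≤ hp μ j := by
      have := μ.colLen_anti 0 j (Nat.zero_le _)
      simp only [hp, Lb, dd]; omega
    have h2 : hp μ j < k := by rw [← hpb]; exact hp_lt_hp hj
    have h3 : hp μ j ≠ k - 1 := by
      obtain ⟨r, hr⟩ := hvk1
      intro hc; exact vp_ne_hp (μ := μ) r j (by omega)
    have h4 : hp μ j ∉ VF μ := by
      intro hc
      obtain ⟨r, hr⟩ := (mem_VF.mp hc).1
      exact vp_ne_hp r j hr
    exact ⟨⟨h1, by omega⟩, h4⟩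
  · rintro ⟨⟨h1, h2⟩, h3⟩
    have hnv : ¬ IsV μ p := fun hc => h3 (mem_VF.mpr ⟨hc, h1⟩)
    obtain ⟨j, hj⟩ := cover hnv
    refine ⟨j, ?_, hj⟩
    by_contra hc
    have := (hp_strictMono (μ := μ)).le_iff_le.mpr (not_lt.mp hc : b ≤ j)
    omega

lemma col_image (hb : b = μ.rowLen a) (ha : a = μ.colLen b) (hk : (b:ℤ) - a = k)
    (hvk : ¬ IsV μ k) :
    (range a).image (vp μ) = (VF μ).filter (fun v => k < v) := by
  ext p
  simp only [Finset.mem_image, mem_range, Finset.mem_filter]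
  constructor
  · rintro ⟨i, hi, rfl⟩
    have hmem : (i, b) ∈ μ := mem_iff_lt_colLen.mpr (by omega)
    have h0 : (i, 0) ∈ μ := μ.up_left_mem le_rfl (Nat.zero_le _) hmem
    have hdd : i < dd μ := mem_iff_lt_colLen.mp h0
    have hvi : vp μ i > k - 1 := by
      have : vp μ a = k - 1 := by simp only [vp]; omega
      rw [← this]; exact vp_lt_vp hi
    have hne : vp μ i ≠ k := fun hc => hvk ⟨i, hc⟩
    exact ⟨mem_image.mpr ⟨i, mem_range.mpr hdd, rfl⟩, by omega⟩
  · rintro ⟨h1, h2⟩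
    obtain ⟨r, _, rfl⟩ := mem_image.mp h1
    refine ⟨r, ?_, rfl⟩
    by_contra hc
    have hva : vp μ a = k - 1 := by simp only [vp]; omega
    rcases Nat.lt_or_ge a r with h'|h'
    · have := vp_lt_vp (μ := μ) h'; omega
    · have : r = a := by omega
      subst this; omega



open YoungDiagram Finset

variable {μ ν : YoungDiagram} {a b : ℕ} {k : ℤ}

lemma ratio_cells (hcells : ν.cells = insert (a,b) μ.cells) (hnot : (a,b) ∉ μ)
    (hb : b = μ.rowLen a) (ha : a = μ.colLen b) :
    Hprod μ / Hprod ν =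
      (∏ j ∈ range b, ((hookLen μ a j : ℚ) / ((hookLen μ a j : ℚ) + 1))) *
      (∏ i ∈ range a, ((hookLen μ i b : ℚ) / ((hookLen μ i b : ℚ) + 1))) := by
  have hnotc : (a,b) ∉ μ.cells := by rwa [μ.mem_cells]
  have hHν : Hprod ν = ∏ c ∈ μ.cells, (hookLen ν c.1 c.2 : ℚ) := by
    rw [Hprod, hcells, Finset.prod_insert hnotc, hookLen_insert_new hcells hnot]
    simp
  have hsplit : Hprod μ / Hprod ν
      = ∏ c ∈ μ.cells, ((hookLen μ c.1 c.2 : ℚ) / (hookLen ν c.1 c.2 : ℚ)) := by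
    rw [Hprod, hHν, ← Finset.prod_div_distrib]
  have hcell : ∀ c ∈ μ.cells, ((hookLen μ c.1 c.2 : ℚ) / (hookLen ν c.1 c.2 : ℚ))
      = if (c.1 = a ∨ c.2 = b) then
          ((hookLen μ c.1 c.2 : ℚ) / ((hookLen μ c.1 c.2 : ℚ) + 1)) else 1 := by
    rintro ⟨i, j⟩ hc
    rw [μ.mem_cells] at hc
    have hins := hookLen_insert hcells hnot hb ha hc
    by_cases hab : i = a ∨ j = b
    · rw [if_pos hab]
      rw [hins, if_pos hab]
      push_cast
      ring_nf
    · rw [if_neg hab]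
      rw [hins, if_neg hab]
      have := hookLen_pos hc
      have hne : ((hookLen μ i j : ℚ)) ≠ 0 := by positivity
      simp only [Nat.add_zero]
      exact div_self hne
  rw [hsplit, Finset.prod_congr rfl hcell, ← Finset.prod_filter]
  have hfor : Finset.filter (fun c => c.1 = a ∨ c.2 = b) μ.cells
      = Finset.filter (fun c => c.1 = a) μ.cells ∪ Finset.filter (fun c => c.2 = b) μ.cells :=
    Finset.filter_or _ _ _
  have hdisj : Disjoint (Finset.filter (fun c => c.1 = a) μ.cells)
      (Finset.filter (fun c => c.2 = b) μ.cells) := by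
    rw [Finset.disjoint_left]
    rintro ⟨i, j⟩ h1 h2
    simp only [Finset.mem_filter] at h1 h2
    apply hnotc
    obtain ⟨hm, rfl⟩ := h1
    obtain ⟨_, rfl⟩ := h2
    exact hm
  have hrowset : Finset.filter (fun c => c.1 = a) μ.cells
      = (range b).image (fun j => (a, j)) := by
    ext ⟨i, j⟩
    simp only [Finset.mem_filter, Finset.mem_image, mem_range, μ.mem_cells]
    constructor
    · rintro ⟨h1, h2⟩
      subst h2
      exact ⟨j, by rw [hb]; exact mem_iff_lt_rowLen.mp h1, rfl⟩
    · rintro ⟨j', hj', h'⟩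
      obtain ⟨rfl, rfl⟩ : a = i ∧ j' = j := by
        rw [Prod.ext_iff] at h'; exact ⟨h'.1, h'.2⟩
      exact ⟨mem_iff_lt_rowLen.mpr (by omega), rfl⟩
  have hcolset : Finset.filter (fun c => c.2 = b) μ.cells
      = (range a).image (fun i => (i, b)) := by
    ext ⟨i, j⟩
    simp only [Finset.mem_filter, Finset.mem_image, mem_range, μ.mem_cells]
    constructor
    · rintro ⟨h1, h2⟩
      subst h2
      exact ⟨i, by rw [ha]; exact mem_iff_lt_colLen.mp h1, rfl⟩
    · rintro ⟨i', hi', h'⟩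
      obtain ⟨rfl, rfl⟩ : i' = i ∧ b = j := by
        rw [Prod.ext_iff] at h'; exact ⟨h'.1, h'.2⟩
      exact ⟨mem_iff_lt_colLen.mpr (by omega), rfl⟩
  rw [hfor, Finset.prod_union hdisj, hrowset, hcolset,
    Finset.prod_image (by intro s _ t _ h'; simpa using h'),
    Finset.prod_image (by intro s _ t _ h'; simpa using h')]



open YoungDiagram Finset

variable {μ ν : YoungDiagram} {a b : ℕ} {k : ℤ}

lemma row_prod (hb : b = μ.rowLen a) (ha : a = μ.colLen b) (hk : (b:ℤ) - a = k) :
    (∏ j ∈ range b, ((hookLen μ a j : ℚ) / ((hookLen μ a j : ℚ) + 1)))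
      = ∏ p ∈ Finset.Icc (Lb μ) (k-2) \ VF μ, (((k:ℚ) - p - 1) / ((k:ℚ) - p)) := by
  rw [← row_image hb ha hk, Finset.prod_image (by intro s _ t _ h'; exact hp_strictMono.injective h')]
  apply Finset.prod_congr rfl
  intro j hj
  rw [mem_range] at hj
  have hcast := row_hook_cast hb hk hj
  have h1 : ((hookLen μ a j : ℚ)) = (k:ℚ) - (hp μ j : ℚ) - 1 := by
    exact_mod_cast congrArg (Int.cast : ℤ → ℚ) hcast
  rw [h1]
  ring_nf

lemma col_prod (hb : b = μ.rowLen a) (ha : a = μ.colLen b) (hk : (b:ℤ) - a = k)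
    (hvk : ¬ IsV μ k) :
    (∏ i ∈ range a, ((hookLen μ i b : ℚ) / ((hookLen μ i b : ℚ) + 1)))
      = ∏ v ∈ (VF μ).filter (fun v => k < v), (((k:ℚ) - v) / ((k:ℚ) - v - 1)) := by
  rw [← col_image hb ha hk hvk, Finset.prod_image (by intro s _ t _ h'; exact vp_inj h')]
  apply Finset.prod_congr rfl
  intro i hi
  rw [mem_range] at hi
  have hcast := col_hook_cast ha hk hi
  have h1 : ((hookLen μ i b : ℚ)) = (vp μ i : ℚ) - (k:ℚ) := by
    exact_mod_cast congrArg (Int.cast : ℤ → ℚ) hcast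
  rw [h1]
  -- (v - k)/(v - k + 1) = (k - v)/(k - v - 1), valid whenever denominators nonzero
  have hgt : k < vp μ i := by
    have hva : vp μ a = k - 1 := by simp only [vp]; omega
    have h2 : vp μ i > k - 1 := by rw [← hva]; exact vp_lt_vp hi
    have h3 : vp μ i ≠ k := fun hc => hvk ⟨i, hc⟩
    omega
  have hq : (1:ℚ) ≤ (vp μ i : ℚ) - k := by
    have : (1:ℤ) ≤ vp μ i - k := by omega
    exact_mod_cast this
  rw [div_eq_div_iff (by linarith) (by linarith)]
  ring



open YoungDiagram Finset

variable {μ ν : YoungDiagram} {a b : ℕ} {k : ℤ}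

lemma ratio_VF (hcells : ν.cells = insert (a,b) μ.cells) (hnot : (a,b) ∉ μ)
    (hb : b = μ.rowLen a) (ha : a = μ.colLen b) (hk : (b:ℤ) - a = k)
    (hvk : ¬ IsV μ k) :
    (Hprod μ / Hprod ν) * (if k = Lb μ then 1 else ((k:ℚ) - (Lb μ : ℚ)))
      = ∏ v ∈ (VF μ).erase (k-1), (((k:ℚ) - v) / ((k:ℚ) - v - 1)) := by
  have hknot : k ∉ VF μ := fun hc => hvk (mem_VF.mp hc).1
  have hkL : Lb μ ≤ k := by
    by_contra hc
    exact hvk (isV_of_lt_Lb (by omega))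
  rw [ratio_cells hcells hnot hb ha, row_prod hb ha hk, col_prod hb ha hk hvk]
  by_cases hcase : k = Lb μ
  · rw [if_pos hcase]
    have hempty : Finset.Icc (Lb μ) (k-2) = ∅ := Finset.Icc_eq_empty (by omega)
    have herase : (VF μ).erase (k-1) = VF μ := by
      apply Finset.erase_eq_of_notMem
      intro hc
      have := (mem_VF.mp hc).2
      omega
    have hfilter : (VF μ).filter (fun v => k < v) = VF μ := by
      apply Finset.filter_true_of_mem
      intro v hv
      have h1 := (mem_VF.mp hv).2
      have h2 : v ≠ k := fun hc => hknot (hc ▸ hv)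
      omega
    rw [hempty, herase, hfilter]
    simp
  · rw [if_neg hcase]
    have hkL' : Lb μ < k := lt_of_le_of_ne hkL (Ne.symm hcase)
    have hm1 : k - 1 ∈ VF μ := mem_VF.mpr ⟨⟨a, by simp only [vp]; omega⟩, by omega⟩
    set VFle := (VF μ).filter (fun v => v ≤ k - 2) with hVFle
    set VFgt := (VF μ).filter (fun v => k < v) with hVFgt
    have hsub : VFle ⊆ Finset.Icc (Lb μ) (k-2) := by
      intro v hv
      rw [hVFle, Finset.mem_filter] at hv
      rw [Finset.mem_Icc]
      exact ⟨(mem_VF.mp hv.1).2, hv.2⟩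
    have hsd : Finset.Icc (Lb μ) (k-2) \ VF μ = Finset.Icc (Lb μ) (k-2) \ VFle := by
      ext p
      simp only [Finset.mem_sdiff, Finset.mem_Icc, hVFle, Finset.mem_filter]
      constructor
      · rintro ⟨h1, h2⟩; exact ⟨h1, fun hc => h2 hc.1⟩
      · rintro ⟨h1, h2⟩; exact ⟨h1, fun hc => h2 ⟨hc, h1.2⟩⟩
    have htel := telescope_Icc (Lb μ) k (by omega)
    have hps : (∏ p ∈ Finset.Icc (Lb μ) (k-2) \ VFle, (((k:ℚ) - p - 1) / ((k:ℚ) - p)))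
        * (∏ p ∈ VFle, (((k:ℚ) - p - 1) / ((k:ℚ) - p)))
        = ∏ p ∈ Finset.Icc (Lb μ) (k-2), (((k:ℚ) - p - 1) / ((k:ℚ) - p)) :=
      Finset.prod_sdiff hsub
    rw [htel] at hps
    -- hps : ∏_{Icc \ VFle} f * ∏_{VFle} f = 1/(k - Lb)
    have hinv : (∏ p ∈ VFle, (((k:ℚ) - p - 1) / ((k:ℚ) - p)))
        * (∏ p ∈ VFle, (((k:ℚ) - p) / ((k:ℚ) - p - 1))) = 1 := by
      rw [← Finset.prod_mul_distrib]
      apply Finset.prod_eq_one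
      intro p hp
      rw [hVFle, Finset.mem_filter] at hp
      have h1 : ((k:ℚ) - p - 1) ≠ 0 := by
        have : (1:ℤ) ≤ k - p - 1 := by omega
        have : (1:ℚ) ≤ (k:ℚ) - p - 1 := by exact_mod_cast this
        linarith
      have h2 : ((k:ℚ) - p) ≠ 0 := by
        have : (1:ℤ) ≤ k - p := by omega
        have : (1:ℚ) ≤ (k:ℚ) - p := by exact_mod_cast this
        linarith
      field_simp
    have herase : (VF μ).erase (k-1) = VFle ∪ VFgt := by
      ext v
      simp only [Finset.mem_erase, hVFle, hVFgt, Finset.mem_union, Finset.mem_filter]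
      constructor
      · rintro ⟨h1, h2⟩
        have : v ≠ k := fun hc => hknot (hc ▸ h2)
        rcases lt_or_ge v k with h'|h'
        · exact Or.inl ⟨h2, by omega⟩
        · exact Or.inr ⟨h2, by omega⟩
      · rintro (⟨h1, h2⟩|⟨h1, h2⟩)
        · exact ⟨by omega, h1⟩
        · exact ⟨by omega, h1⟩
    have hdisj : Disjoint VFle VFgt := by
      rw [Finset.disjoint_left]
      intro v h1 h2
      rw [hVFle, Finset.mem_filter] at h1
      rw [hVFgt, Finset.mem_filter] at h2
      omega
    rw [herase, Finset.prod_union hdisj, hsd]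
    have hkLne : ((k:ℚ) - (Lb μ : ℚ)) ≠ 0 := by
      have : (1:ℤ) ≤ k - Lb μ := by omega
      have : (1:ℚ) ≤ (k:ℚ) - (Lb μ : ℚ) := by exact_mod_cast this
      linarith
    -- from hps : A * F = 1/(k-L) where A = ∏_{Icc\VFle} f, F = ∏_{VFle} f
    -- from hinv : F * G = 1 where G = ∏_{VFle} g
    -- goal : A * C * (k-L) = G * C where C = ∏_{VFgt} g
    set A := ∏ p ∈ Finset.Icc (Lb μ) (k-2) \ VFle, (((k:ℚ) - p - 1) / ((k:ℚ) - p)) with hA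
    set F := ∏ p ∈ VFle, (((k:ℚ) - p - 1) / ((k:ℚ) - p)) with hF
    set G := ∏ p ∈ VFle, (((k:ℚ) - p) / ((k:ℚ) - p - 1)) with hG
    have hFne : F ≠ 0 := by
      intro hc
      rw [hc, zero_mul] at hinv
      exact one_ne_zero hinv.symm
    have hAeq : A = (1 / ((k:ℚ) - (Lb μ:ℚ))) * G := by
      have h1 : A * (F * G) = A := by rw [hinv, mul_one]
      rw [← mul_assoc, hps] at h1
      linarith [h1]
    rw [hAeq]
    have hfin : ∀ (g c : ℚ), (1 / ((k:ℚ) - (Lb μ:ℚ)) * g) * c * ((k:ℚ) - (Lb μ:ℚ)) = g * c := by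
      intro g c
      field_simp
    exact hfin G _



open YoungDiagram Finset

lemma hook_ratio {μ ν : YoungDiagram} {k : ℤ} (hadd : AddBoxAt μ ν k) :
    (Hprod μ / Hprod ν) * (∏ α ∈ (AF μ).erase k, ((k:ℚ) - α)) = ∏ β ∈ BF μ, ((k:ℚ) - β) := by
  obtain ⟨a, b, hb, ha, hk, hcells⟩ := addBoxAt_elim hadd
  have hnot : (a, b) ∉ μ := by rw [mem_iff_lt_rowLen]; omega
  obtain ⟨hvk1, hvk⟩ := inner_iff.mp ⟨ν, hadd⟩
  have hknot : k ∉ VF μ := fun hc => hvk (mem_VF.mp hc).1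
  have hkL : Lb μ ≤ k := by
    by_contra hc
    exact hvk (isV_of_lt_Lb (by omega))
  set t0 : ℚ := if k = Lb μ then 1 else ((k:ℚ) - (Lb μ:ℚ)) with ht0
  have key := ratio_VF hcells hnot hb ha hk hvk
  rw [← ht0] at key
  set N : ℚ := ∏ v ∈ VF μ, ((k:ℚ) - v) with hN0
  set D : ℚ := ∏ v ∈ (VF μ).erase (k-1), ((k:ℚ) - v - 1) with hD0
  have hsplitratio : (∏ v ∈ (VF μ).erase (k-1), (((k:ℚ) - v) / ((k:ℚ) - v - 1))) = N / D := by
    rw [hN0, hD0, Finset.prod_div_distrib]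
    congr 1
    exact Finset.prod_erase _ (by push_cast; ring)
  rw [hsplitratio] at key
  -- key : (Hprod μ / Hprod ν) * t0 = N / D
  -- reindex D over WF.erase k
  have himgD : ((VF μ).erase (k-1)).image (· + 1) = (WF μ).erase k := by
    ext w
    simp only [Finset.mem_image, Finset.mem_erase, mem_WF]
    constructor
    · rintro ⟨v, ⟨hv1, hv2⟩, rfl⟩
      exact ⟨by omega, by simpa using hv2⟩
    · rintro ⟨h1, h2⟩
      exact ⟨w - 1, ⟨by omega, h2⟩, by ring⟩
  have hD : D = ∏ w ∈ (WF μ).erase k, ((k:ℚ) - w) := by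
    rw [← himgD, Finset.prod_image (by intro s _ t _ h'; simpa using h'), hD0]
    apply Finset.prod_congr rfl
    intro v _
    push_cast
    ring
  -- split WF.erase k
  set E : ℚ := ∏ w ∈ (WF μ \ VF μ).erase k, ((k:ℚ) - w) with hE0
  set I : ℚ := ∏ w ∈ WF μ ∩ VF μ, ((k:ℚ) - w) with hI0
  have hWsplit : (WF μ).erase k = ((WF μ \ VF μ).erase k) ∪ (WF μ ∩ VF μ) := by
    ext w
    simp only [Finset.mem_erase, Finset.mem_union, Finset.mem_sdiff, Finset.mem_inter]
    constructor
    · rintro ⟨h1, h2⟩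
      by_cases hw : w ∈ VF μ
      · exact Or.inr ⟨h2, hw⟩
      · exact Or.inl ⟨h1, h2, hw⟩
    · rintro (⟨h1, h2, h3⟩|⟨h1, h2⟩)
      · exact ⟨h1, h2⟩
      · exact ⟨fun hc => hknot (hc ▸ h2), h1⟩
  have hWdisj : Disjoint ((WF μ \ VF μ).erase k) (WF μ ∩ VF μ) := by
    rw [Finset.disjoint_left]
    intro w h1 h2
    simp only [Finset.mem_erase, Finset.mem_sdiff] at h1
    simp only [Finset.mem_inter] at h2
    exact h1.2.2 h2.2
  have hDEI : D = E * I := by rw [hD, hWsplit, Finset.prod_union hWdisj]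
  -- split N over BF
  have hNsplit : N = (∏ β ∈ BF μ, ((k:ℚ) - β)) * I := by
    have h1 : (∏ v ∈ VF μ \ (VF μ ∩ WF μ), ((k:ℚ) - v)) * (∏ v ∈ VF μ ∩ WF μ, ((k:ℚ) - v))
        = N := Finset.prod_sdiff Finset.inter_subset_left
    rw [Finset.sdiff_inter_self_left] at h1
    rw [← h1, hI0, Finset.inter_comm]
    rfl
  -- compute the AF-product
  have hAFer : (∏ α ∈ (AF μ).erase k, ((k:ℚ) - α)) = t0 * E := by
    by_cases hcase : k = Lb μ
    · rw [ht0, if_pos hcase]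
      have h1 : (AF μ).erase k = WF μ \ VF μ := by
        rw [AF, ← hcase, Finset.erase_insert]
        · rw [Finset.mem_sdiff]
          rintro ⟨h1, _⟩
          exact Lb_not_mem_WF (hcase ▸ h1)
      have h2 : (WF μ \ VF μ).erase k = WF μ \ VF μ := by
        apply Finset.erase_eq_of_notMem
        rw [Finset.mem_sdiff]
        rintro ⟨h1', _⟩
        exact Lb_not_mem_WF (hcase ▸ h1')
      rw [h1, hE0, h2, one_mul]
    · rw [ht0, if_neg hcase]
      have h1 : (AF μ).erase k = insert (Lb μ) ((WF μ \ VF μ).erase k) := by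
        rw [AF, Finset.erase_insert_of_ne (fun hc => hcase hc.symm)]
      have h2 : Lb μ ∉ (WF μ \ VF μ).erase k := by
        rw [Finset.mem_erase, Finset.mem_sdiff]
        rintro ⟨_, h1', _⟩
        exact Lb_not_mem_WF h1'
      rw [h1, Finset.prod_insert h2, hE0]
  -- nonvanishing
  have hsub_ne : ∀ w : ℤ, w ≠ k → ((k:ℚ) - w) ≠ 0 := by
    intro w hw hc
    have : (k:ℚ) = (w:ℚ) := by linarith
    exact hw (by exact_mod_cast this.symm)
  have hIne : I ≠ 0 := by
    rw [hI0]
    apply Finset.prod_ne_zero_iff.mpr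
    intro w hw
    rw [Finset.mem_inter] at hw
    exact hsub_ne w (fun hc => hknot (hc ▸ hw.2))
  have hEne : E ≠ 0 := by
    rw [hE0]
    apply Finset.prod_ne_zero_iff.mpr
    intro w hw
    rw [Finset.mem_erase] at hw
    exact hsub_ne w hw.1
  rw [hAFer, ← mul_assoc, key, hDEI, hNsplit]
  field_simp


open Polynomial

lemma esymm_zero' (s : Multiset ℚ) : s.esymm 0 = 1 := by
  rw [Multiset.esymm, Multiset.powersetCard_zero_left]
  simp

lemma esymm_one' (s : Multiset ℚ) : s.esymm 1 = s.sum := by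
  rw [Multiset.esymm, Multiset.powersetCard_one, Multiset.map_map]
  simp

lemma esymm_two_cons (a : ℚ) (s : Multiset ℚ) :
    (a ::ₘ s).esymm 2 = s.esymm 2 + a * s.sum := by
  rw [Multiset.esymm, Multiset.powersetCard_cons, Multiset.map_add, Multiset.sum_add,
    Multiset.map_map]
  congr 1
  rw [Multiset.powersetCard_one, Multiset.map_map]
  have : ((Multiset.prod ∘ Multiset.cons a) ∘ singleton) = fun x : ℚ => a * x := by
    funext x
    simp
  rw [this]
  have h2 : (Multiset.map (fun x => a * x) s).sum = a * s.sum := by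
    induction s using Multiset.induction_on with
    | empty => simp
    | cons b t ih => simp [ih, mul_add]
  rw [h2]

lemma two_esymm_two (s : Multiset ℚ) :
    2 * s.esymm 2 = s.sum ^ 2 - (s.map (fun x => x^2)).sum := by
  induction s using Multiset.induction_on with
  | empty =>
    rw [Multiset.esymm]
    simp [Multiset.powersetCard_zero_right]
  | cons a s ih =>
    rw [esymm_two_cons]
    simp only [Multiset.map_cons, Multiset.sum_cons]
    ring_nf
    ring_nf at ih
    linarith [ih]

lemma coeff_top (s : Multiset ℚ) :
    ((s.map (fun t => X - C t)).prod).coeff (Multiset.card s) = 1 := by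
  rw [Multiset.prod_X_sub_C_coeff s le_rfl]
  simp [esymm_zero']

lemma coeff_sub1 (s : Multiset ℚ) (k : ℕ) (h : Multiset.card s = k + 1) :
    ((s.map (fun t => X - C t)).prod).coeff k = - s.sum := by
  rw [Multiset.prod_X_sub_C_coeff s (by omega), h]
  have h1 : k + 1 - k = 1 := by omega
  rw [h1, esymm_one']
  ring

lemma coeff_sub2 (s : Multiset ℚ) (k : ℕ) (h : Multiset.card s = k + 2) :
    ((s.map (fun t => X - C t)).prod).coeff k
      = (s.sum ^ 2 - (s.map (fun x => x^2)).sum) / 2 := by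
  rw [Multiset.prod_X_sub_C_coeff s (by omega), h]
  have h1 : k + 2 - k = 2 := by omega
  rw [h1]
  have h2 := two_esymm_two s
  have : s.esymm 2 = (s.sum ^ 2 - (s.map (fun x => x^2)).sum) / 2 := by linarith
  rw [this]
  ring



open Polynomial Finset

lemma multiset_prod_finset (s : Finset ℕ) (v : ℕ → ℚ) :
    ((s.val.map v).map (fun t => X - C t)).prod = ∏ j ∈ s, (X - C (v j)) := by
  rw [Multiset.map_map]
  rfl

lemma coeff_X2_prod (s : Finset ℕ) (v : ℕ → ℚ) :
    (X^2 * ∏ j ∈ s, (X - C (v j))).coeff (s.card + 2) = 1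
  ∧ (X^2 * ∏ j ∈ s, (X - C (v j))).coeff (s.card + 1) = -(∑ j ∈ s, v j)
  ∧ (X^2 * ∏ j ∈ s, (X - C (v j))).coeff s.card
      = ((∑ j ∈ s, v j)^2 - (∑ j ∈ s, (v j)^2)) / 2 := by
  have hms : (((0:ℚ) ::ₘ (0:ℚ) ::ₘ (s.val.map v)).map (fun t => X - C t)).prod
      = X^2 * ∏ j ∈ s, (X - C (v j)) := by
    rw [Multiset.map_cons, Multiset.map_cons, Multiset.prod_cons, Multiset.prod_cons,
      multiset_prod_finset]
    rw [C_0, sub_zero]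
    ring
  have hcard : Multiset.card ((0:ℚ) ::ₘ (0:ℚ) ::ₘ (s.val.map v)) = s.card + 2 := by
    rw [Multiset.card_cons, Multiset.card_cons, Multiset.card_map]
    rfl
  have hsum : ((0:ℚ) ::ₘ (0:ℚ) ::ₘ (s.val.map v)).sum = ∑ j ∈ s, v j := by
    simp only [Multiset.sum_cons, zero_add]
    rfl
  have hsumsq : (((0:ℚ) ::ₘ (0:ℚ) ::ₘ (s.val.map v)).map (fun x => x^2)).sum
      = ∑ j ∈ s, (v j)^2 := by
    rw [Multiset.map_cons, Multiset.map_cons, Multiset.sum_cons, Multiset.sum_cons,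
      Multiset.map_map]
    have h1 : ((fun x : ℚ => x^2) ∘ v) = fun j => (v j)^2 := rfl
    rw [h1]
    have h2 : (s.val.map (fun j => (v j)^2)).sum = ∑ j ∈ s, (v j)^2 := rfl
    rw [h2]
    norm_num
  refine ⟨?_, ?_, ?_⟩
  · rw [← hms, ← hcard]
    exact coeff_top _
  · rw [← hms, coeff_sub1 _ _ (by omega), hsum]
  · rw [← hms, coeff_sub2 _ _ (by omega), hsum, hsumsq]

lemma lagrange_sums (m : ℕ) (ξ η c : ℕ → ℚ)
    (hinj : Set.InjOn ξ ((range (m+1) : Finset ℕ) : Set ℕ))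
    (hc : ∀ i ∈ range (m+1),
      c i * ∏ j ∈ (range (m+1)).erase i, (ξ i - ξ j) = ∏ j ∈ range m, (ξ i - η j)) :
    (∑ i ∈ range (m+1), c i) = 1 ∧
    (∑ i ∈ range (m+1), c i * ξ i) = (∑ i ∈ range (m+1), ξ i) - (∑ j ∈ range m, η j) ∧
    2 * (∑ i ∈ range (m+1), c i * (ξ i)^2)
      = ((∑ i ∈ range (m+1), ξ i) - ∑ j ∈ range m, η j)^2
        + (∑ i ∈ range (m+1), (ξ i)^2) - (∑ j ∈ range m, (η j)^2) := by
  set P : ℚ[X] := ∏ j ∈ range m, (X - C (η j)) with hP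
  set S : ℚ[X] := ∑ i ∈ range (m+1), C (c i) * ∏ j ∈ (range (m+1)).erase i, (X - C (ξ j))
    with hS
  have hdegP : P.natDegree ≤ m := by
    refine le_trans (Polynomial.natDegree_prod_le _ _) ?_
    have : ∀ j ∈ range m, (X - C (η j)).natDegree = 1 := fun j _ => natDegree_X_sub_C _
    rw [Finset.sum_congr rfl this]
    simp
  have hdegS : S.natDegree ≤ m := by
    apply Polynomial.natDegree_sum_le_of_forall_le
    intro i hi
    refine le_trans (Polynomial.natDegree_mul_le) ?_
    rw [natDegree_C, zero_add]
    refine le_trans (Polynomial.natDegree_prod_le _ _) ?_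
    have : ∀ j ∈ (range (m+1)).erase i, (X - C (ξ j)).natDegree = 1 :=
      fun j _ => natDegree_X_sub_C _
    rw [Finset.sum_congr rfl this, Finset.sum_const, Finset.card_erase_of_mem (by simpa using hi)]
    simp
  have hzero : P - S = 0 := by
    apply Polynomial.eq_zero_of_degree_lt_of_eval_index_eq_zero (v := ξ) (range (m+1)) hinj
    · rw [Finset.card_range]
      calc (P - S).degree ≤ ((P - S).natDegree : WithBot ℕ) := Polynomial.degree_le_natDegree
        _ < ((m + 1 : ℕ) : WithBot ℕ) := by
            have h1 : (P - S).natDegree ≤ m :=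
              le_trans (Polynomial.natDegree_sub_le _ _) (max_le hdegP hdegS)
            exact_mod_cast Nat.lt_succ_of_le h1
    · intro i hi
      rw [Polynomial.eval_sub, sub_eq_zero]
      have hevS : Polynomial.eval (ξ i) S
          = c i * ∏ j ∈ (range (m+1)).erase i, (ξ i - ξ j) := by
        rw [hS, Polynomial.eval_finset_sum]
        rw [Finset.sum_eq_single i ?h1 ?h2]
        · rw [Polynomial.eval_mul, Polynomial.eval_C, Polynomial.eval_prod]
          congr 1
          apply Finset.prod_congr rfl
          intro j _
          simp
        · intro i' hi' hne
          rw [Polynomial.eval_mul, Polynomial.eval_prod]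
          have : ∏ j ∈ (range (m+1)).erase i', Polynomial.eval (ξ i) (X - C (ξ j)) = 0 := by
            apply Finset.prod_eq_zero (Finset.mem_erase.mpr ⟨Ne.symm hne, hi⟩)
            simp
          rw [this, mul_zero]
        · intro h
          exact absurd hi h
      have hevP : Polynomial.eval (ξ i) P = ∏ j ∈ range m, (ξ i - η j) := by
        rw [hP, Polynomial.eval_prod]
        apply Finset.prod_congr rfl
        intro j _
        simp
      rw [hevP, hevS, hc i hi]
  have hid : P = S := sub_eq_zero.mp hzero
  have hid2 : X^2 * P = ∑ i ∈ range (m+1),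
      C (c i) * (X^2 * ∏ j ∈ (range (m+1)).erase i, (X - C (ξ j))) := by
    rw [hid, hS, Finset.mul_sum]
    apply Finset.sum_congr rfl
    intro i _
    ring
  -- coefficients of both sides at degrees m, m+1, m+2
  obtain ⟨hLP2, hLP1, hLP0⟩ := coeff_X2_prod (range m) η
  rw [Finset.card_range] at hLP2 hLP1 hLP0
  have hcoeff : ∀ t : ℕ, (X^2 * P).coeff t
      = ∑ i ∈ range (m+1), c i * (X^2 * ∏ j ∈ (range (m+1)).erase i, (X - C (ξ j))).coeff t := by
    intro t
    rw [hid2, Polynomial.finset_sum_coeff]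
    apply Finset.sum_congr rfl
    intro i _
    rw [Polynomial.coeff_C_mul]
  have hQcoeff : ∀ i ∈ range (m+1),
      ((X^2 * ∏ j ∈ (range (m+1)).erase i, (X - C (ξ j))).coeff (m + 2) = 1
    ∧ (X^2 * ∏ j ∈ (range (m+1)).erase i, (X - C (ξ j))).coeff (m + 1)
        = -(∑ j ∈ (range (m+1)).erase i, ξ j)
    ∧ (X^2 * ∏ j ∈ (range (m+1)).erase i, (X - C (ξ j))).coeff m
        = ((∑ j ∈ (range (m+1)).erase i, ξ j)^2 - (∑ j ∈ (range (m+1)).erase i, (ξ j)^2)) / 2) := by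
    intro i hi
    have hcard : ((range (m+1)).erase i).card = m := by
      rw [Finset.card_erase_of_mem (by simpa using hi), Finset.card_range]
      omega
    have := coeff_X2_prod ((range (m+1)).erase i) ξ
    rw [hcard] at this
    exact this
  set E1 := ∑ i ∈ range (m+1), ξ i with hE1
  set E2 := ∑ i ∈ range (m+1), (ξ i)^2 with hE2
  set F1 := ∑ j ∈ range m, η j with hF1
  set F2 := ∑ j ∈ range m, (η j)^2 with hF2
  have herase1 : ∀ i ∈ range (m+1), ∑ j ∈ (range (m+1)).erase i, ξ j = E1 - ξ i := by
    intro i hi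
    have := Finset.sum_erase_add (range (m+1)) ξ hi
    linarith
  have herase2 : ∀ i ∈ range (m+1), ∑ j ∈ (range (m+1)).erase i, (ξ j)^2 = E2 - (ξ i)^2 := by
    intro i hi
    have := Finset.sum_erase_add (range (m+1)) (fun j => (ξ j)^2) hi
    linarith
  -- the three scalar equations
  have eq0 : (1:ℚ) = ∑ i ∈ range (m+1), c i := by
    have h := hcoeff (m+2)
    rw [hLP2] at h
    rw [h]
    apply Finset.sum_congr rfl
    intro i hi
    rw [(hQcoeff i hi).1, mul_one]
  have eq1 : -F1 = ∑ i ∈ range (m+1), c i * (-(E1 - ξ i)) := by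
    have h := hcoeff (m+1)
    rw [hLP1] at h
    rw [h]
    apply Finset.sum_congr rfl
    intro i hi
    rw [(hQcoeff i hi).2.1, herase1 i hi]
  have eq2 : (F1^2 - F2)/2
      = ∑ i ∈ range (m+1), c i * (((E1 - ξ i)^2 - (E2 - (ξ i)^2)) / 2) := by
    have h := hcoeff m
    rw [hLP0] at h
    rw [h]
    apply Finset.sum_congr rfl
    intro i hi
    rw [(hQcoeff i hi).2.2, herase1 i hi, herase2 i hi]
  -- expand
  set S0 := ∑ i ∈ range (m+1), c i with hS0
  set S1 := ∑ i ∈ range (m+1), c i * ξ i with hS1v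
  set S2 := ∑ i ∈ range (m+1), c i * (ξ i)^2 with hS2v
  have ex1 : ∑ i ∈ range (m+1), c i * (-(E1 - ξ i)) = -E1 * S0 + S1 := by
    rw [hS0, hS1v, Finset.mul_sum, ← Finset.sum_add_distrib]
    apply Finset.sum_congr rfl
    intro i _
    ring
  have ex2 : ∑ i ∈ range (m+1), c i * (((E1 - ξ i)^2 - (E2 - (ξ i)^2)) / 2)
      = ((E1^2 - E2)/2) * S0 - E1 * S1 + S2 := by
    rw [hS0, hS1v, hS2v, Finset.mul_sum, Finset.mul_sum, ← Finset.sum_sub_distrib,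
      ← Finset.sum_add_distrib]
    apply Finset.sum_congr rfl
    intro i _
    ring
  rw [ex1] at eq1
  rw [ex2] at eq2
  have hS0val : S0 = 1 := eq0.symm
  refine ⟨hS0val, ?_, ?_⟩
  · rw [hS0val] at eq1
    linarith
  · have hS1val : S1 = E1 - F1 := by rw [hS0val] at eq1; linarith
    rw [hS0val, hS1val] at eq2
    nlinarith [eq2]


end Stmt6Aux

open Stmt6Aux

theorem stmt6 (μ : YoungDiagram) (m : ℕ) (x y : ℕ → ℤ) (h : CornerData μ m x y)
    (lamp : ℕ → YoungDiagram) (hlamp : ∀ i ≤ m, AddBoxAt μ (lamp i) (x i)) :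
    (∑ i ∈ range (m + 1), (Hprod μ / Hprod (lamp i)) * (x i : ℚ)) = 0 ∧
    (∑ i ∈ range (m + 1), (Hprod μ / Hprod (lamp i)) * (x i : ℚ) ^ 2) = (μ.card : ℚ) := by
  obtain ⟨hinner, houter, hxmono, hymono⟩ := h
  have hxinj : ∀ i ∈ range (m+1), ∀ j ∈ range (m+1), x i = x j → i = j := by
    intro i hi j hj hij
    rw [mem_range] at hi hj
    by_contra hne
    rcases Nat.lt_or_ge i j with h'|h'
    · exact absurd hij (hxmono i j h' (by omega)).ne
    · have : j < i := by omega
      exact absurd hij.symm (hxmono j i this (by omega)).ne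
  have hyinj : ∀ i ∈ range m, ∀ j ∈ range m, y (i+1) = y (j+1) → i = j := by
    intro i hi j hj hij
    rw [mem_range] at hi hj
    by_contra hne
    rcases Nat.lt_or_ge i j with h'|h'
    · exact absurd hij (hymono (i+1) (j+1) (by omega) (by omega) (by omega)).ne
    · have : j < i := by omega
      exact absurd hij.symm (hymono (j+1) (i+1) (by omega) (by omega) (by omega)).ne
  have hAF : AF μ = (range (m+1)).image x := by
    ext k
    rw [mem_AF, ← inner_iff, hinner k]
    simp only [Finset.mem_image, mem_range]
    constructor
    · rintro ⟨i, hi, rfl⟩; exact ⟨i, by omega, rfl⟩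
    · rintro ⟨i, hi, rfl⟩; exact ⟨i, by omega, rfl⟩
  have hBF : BF μ = (range m).image (fun j => y (j+1)) := by
    ext k
    rw [mem_BF, ← outer_iff, houter k]
    simp only [Finset.mem_image, mem_range]
    constructor
    · rintro ⟨j, hj1, hj2, rfl⟩; exact ⟨j - 1, by omega, by congr 1; omega⟩
    · rintro ⟨j, hj, rfl⟩; exact ⟨j+1, by omega, by omega, rfl⟩
  have hc : ∀ i ∈ range (m+1), (Hprod μ / Hprod (lamp i))
      * ∏ j ∈ (range (m+1)).erase i, (((x i : ℤ):ℚ) - ((x j : ℤ):ℚ))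
      = ∏ j ∈ range m, (((x i : ℤ):ℚ) - ((y (j+1) : ℤ):ℚ)) := by
    intro i hi
    have hadd : AddBoxAt μ (lamp i) (x i) := hlamp i (by rw [mem_range] at hi; omega)
    have hr := hook_ratio hadd
    have h1 : (AF μ).erase (x i) = ((range (m+1)).erase i).image x := by
      rw [hAF]
      ext k
      simp only [Finset.mem_erase, Finset.mem_image, mem_range]
      constructor
      · rintro ⟨hk1, j, hj, rfl⟩
        refine ⟨j, ⟨?_, hj⟩, rfl⟩
        intro hji
        exact hk1 (by rw [hji])
      · rintro ⟨j, ⟨hne, hj⟩, rfl⟩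
        refine ⟨?_, j, hj, rfl⟩
        intro hc'
        exact hne (hxinj j (mem_range.mpr hj) i hi hc')
    rw [h1, Finset.prod_image ?hx1, hBF, Finset.prod_image ?hy1] at hr
    case hx1 =>
      intro j hj j' hj' hjj
      exact hxinj j (Finset.mem_of_mem_erase hj) j' (Finset.mem_of_mem_erase hj') hjj
    case hy1 =>
      intro j hj j' hj' hjj
      exact hyinj j hj j' hj' hjj
    exact hr
  have hinjQ : Set.InjOn (fun i => ((x i : ℤ):ℚ)) ((range (m+1) : Finset ℕ) : Set ℕ) := by
    intro i hi j hj hij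
    simp only [Finset.coe_range, Set.mem_Iio] at hi hj
    simp only at hij
    apply hxinj i (mem_range.mpr hi) j (mem_range.mpr hj)
    exact_mod_cast hij
  obtain ⟨hs0, hs1, hs2⟩ := lagrange_sums m (fun i => ((x i : ℤ):ℚ)) (fun j => ((y (j+1) : ℤ):ℚ))
    (fun i => Hprod μ / Hprod (lamp i)) hinjQ hc
  -- identify power sums with corner sums
  have hE1 : ∑ i ∈ range (m+1), ((x i : ℤ):ℚ) = ∑ k ∈ AF μ, (k:ℚ) := by
    rw [hAF, Finset.sum_image hxinj]
  have hE2 : ∑ i ∈ range (m+1), ((x i : ℤ):ℚ)^2 = ∑ k ∈ AF μ, (k:ℚ)^2 := by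
    rw [hAF, Finset.sum_image hxinj]
  have hF1 : ∑ j ∈ range m, ((y (j+1) : ℤ):ℚ) = ∑ k ∈ BF μ, (k:ℚ) := by
    rw [hBF, Finset.sum_image hyinj]
  have hF2 : ∑ j ∈ range m, ((y (j+1) : ℤ):ℚ)^2 = ∑ k ∈ BF μ, (k:ℚ)^2 := by
    rw [hBF, Finset.sum_image hyinj]
  have hq1 := q1_eq (μ := μ)
  have hq2 := q2_eq (μ := μ)
  constructor
  · rw [hs1]
    rw [hE1, hF1]
    linarith
  · have h2 : 2 * (∑ i ∈ range (m + 1), (Hprod μ / Hprod (lamp i)) * ((x i : ℤ):ℚ) ^ 2)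
        = 2 * (μ.card : ℚ) := by
      rw [hs2, hE1, hE2, hF1, hF2]
      have hz : (∑ k ∈ AF μ, (k:ℚ)) - (∑ k ∈ BF μ, (k:ℚ)) = 0 := hq1
      nlinarith [hz, hq2]
    linarith
end
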